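/- arXiv:1401.1225 — 4 statements merged into one kernel-verified Lean document; each statement's English description precedes it below -/
import Mathlib

section
/- If P and Q are finite posets each of height at most 2, then the maximum size of a semiantichain in P×Q equals the minimum number of unichains needed to cover P×Q. -/
/-- A *unichain* in the product of two posets: a chain of the form `{p} × C`
or `C × {q}`. -/
def IsUnichain {α β : Type*} [PartialOrder α] [PartialOrder β] (U : Set (α × β)) : Prop :=
  (∃ (p : α) (C : Set β), IsChain (· ≤ ·) C ∧ U = ({p} : Set α) ×ˢ C) ∨
  (∃ (q : β) (C : Set α), IsChain (· ≤ ·) C ∧ U = C ×ˢ ({q} : Set β))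

/-- A *semiantichain*: no two distinct elements lie in a common unichain. -/
def IsSemiantichain {α β : Type*} [PartialOrder α] [PartialOrder β] (S : Set (α × β)) : Prop :=
  ∀ x ∈ S, ∀ y ∈ S, x ≠ y → ∀ U : Set (α × β), IsUnichain U → ¬(x ∈ U ∧ y ∈ U)

/-- The maximum size of a semiantichain in `α × β`. -/
noncomputable def maxSemiantichain (α β : Type*) [PartialOrder α] [PartialOrder β] : ℕ :=
  sSup {n | ∃ S : Set (α × β), IsSemiantichain S ∧ S.ncard = n}

/-- The minimum number of unichains needed to cover `α × β`. -/
noncomputable def minUnichainCover (α β : Type*) [PartialOrder α] [PartialOrder β] : ℕ :=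
  sInf {n | ∃ U : Fin n → Set (α × β), (∀ i, IsUnichain (U i)) ∧ (⋃ i, U i) = Set.univ}

/-- Height: maximum size of a chain. -/
noncomputable def heightP (α : Type*) [PartialOrder α] : ℕ :=
  sSup {n | ∃ C : Set α, IsChain (· ≤ ·) C ∧ C.ncard = n}

/-- Width: maximum size of an antichain. -/
noncomputable def widthP (α : Type*) [PartialOrder α] : ℕ :=
  sSup {n | ∃ A : Set α, IsAntichain (· ≤ ·) A ∧ A.ncard = n}

/-- `dk α k`: maximum size of a union of `k` antichains. -/
noncomputable def dk (α : Type*) [PartialOrder α] (k : ℕ) : ℕ :=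
  sSup {n | ∃ A : Fin k → Set α, (∀ i, IsAntichain (· ≤ ·) (A i)) ∧ (⋃ i, A i).ncard = n}

/-- `ck α k`: maximum size of a union of `k` chains. -/
noncomputable def ck (α : Type*) [PartialOrder α] (k : ℕ) : ℕ :=
  sSup {n | ∃ C : Fin k → Set α, (∀ i, IsChain (· ≤ ·) (C i)) ∧ (⋃ i, C i).ncard = n}

/-- `P` is d-decomposable: it has an antichain partition `A_1, …, A_{h(P)}`
with `|A_1 ∪ … ∪ A_k| = d_k(P)` for every `k ≤ h(P)`. -/
def DDecomposable (α : Type*) [PartialOrder α] : Prop :=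
  ∃ A : Fin (heightP α) → Set α,
    (∀ i, IsAntichain (· ≤ ·) (A i)) ∧
    (∀ i j, i ≠ j → Disjoint (A i) (A j)) ∧
    (⋃ i, A i) = Set.univ ∧
    ∀ k, k ≤ heightP α →
      (⋃ i : Fin (heightP α), ⋃ (_ : (i : ℕ) < k), A i).ncard = dk α k

/-- `P` is c-decomposable: it has a chain partition `C_1, …, C_{w(P)}`
with `|C_1 ∪ … ∪ C_k| = c_k(P)` for every `k ≤ w(P)`. -/
def CDecomposable (α : Type*) [PartialOrder α] : Prop :=
  ∃ C : Fin (widthP α) → Set α,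
    (∀ i, IsChain (· ≤ ·) (C i)) ∧
    (∀ i j, i ≠ j → Disjoint (C i) (C j)) ∧
    (⋃ i, C i) = Set.univ ∧
    ∀ k, k ≤ widthP α →
      (⋃ i : Fin (widthP α), ⋃ (_ : (i : ℕ) < k), C i).ncard = ck α k

private lemma konig_matching {V : Type} [Fintype V] [DecidableEq V]
    (Adj : V → V → Prop) [DecidablePred fun p : V × V => Adj p.1 p.2]
    (hsymm : ∀ v w, Adj v w → Adj w v)
    (Side : V → Prop) [DecidablePred Side]
    (hflip : ∀ v w, Adj v w → (Side v ↔ ¬ Side w)) :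
    ∃ (K : Finset V) (f g : V → V),
      (∀ v w, Adj v w → v ∈ K ∨ w ∈ K) ∧
      Function.Injective f ∧ Function.Injective g ∧
      (∀ v, v ∈ K → Side v → Adj v (f v) ∧ ¬ Side (f v) ∧ f v ∉ K) ∧
      (∀ v, v ∈ K → ¬ Side v → Adj v (g v) ∧ Side (g v) ∧ g v ∉ K) := by
  classical
  -- minimum vertex cover
  have hne : (Finset.univ.filter fun K : Finset V => ∀ v w, Adj v w → v ∈ K ∨ w ∈ K).Nonempty :=
    ⟨Finset.univ, by simp⟩
  obtain ⟨K, hKmem, hKmin⟩ := Finset.exists_min_image _ Finset.card hne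
  have hKcov : ∀ v w, Adj v w → v ∈ K ∨ w ∈ K := (Finset.mem_filter.mp hKmem).2
  -- Hall condition machinery, symmetric in the side predicate
  have main : ∀ S : V → Prop, (∀ v w, Adj v w → (S v ↔ ¬ S w)) →
      ∃ f : V → V, Function.Injective f ∧
        ∀ v, v ∈ K → S v → Adj v (f v) ∧ ¬ S (f v) ∧ f v ∉ K := by
    intro S hS
    classical
    set t : V → Finset V := fun v =>
      if v ∈ K.filter (fun x => S x) then
        Finset.univ.filter (fun w => Adj v w ∧ ¬ S w ∧ w ∉ K)
      else Finset.univ with ht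
    have hall : ∀ s : Finset V, s.card ≤ (s.biUnion t).card := by
      intro s
      by_cases hs : ∀ v ∈ s, v ∈ K.filter (fun x => S x)
      · by_contra hlt
        push_neg at hlt
        -- build a smaller cover
        set K' := (K \ s) ∪ s.biUnion t with hK'
        have hsK : s ⊆ K := fun v hv => (Finset.mem_filter.mp (hs v hv)).1
        have key : ∀ v w, Adj v w → v ∈ K → v ∈ K' ∨ w ∈ K' := by
          intro v w hadj hvK
          by_cases hvs : v ∈ s
          · have hSv : S v := (Finset.mem_filter.mp (hs v hvs)).2
            have hSw : ¬ S w := (hS v w hadj).mp hSv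
            by_cases hwK : w ∈ K
            · have hws : w ∉ s := fun hws => hSw (Finset.mem_filter.mp (hs w hws)).2
              exact Or.inr (Finset.mem_union_left _ (Finset.mem_sdiff.mpr ⟨hwK, hws⟩))
            · refine Or.inr (Finset.mem_union_right _ ?_)
              refine Finset.mem_biUnion.mpr ⟨v, hvs, ?_⟩
              rw [ht]
              simp only [hs v hvs, if_pos]
              exact Finset.mem_filter.mpr ⟨Finset.mem_univ _, hadj, hSw, hwK⟩
          · exact Or.inl (Finset.mem_union_left _ (Finset.mem_sdiff.mpr ⟨hvK, hvs⟩))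
        have hK'cov : ∀ v w, Adj v w → v ∈ K' ∨ w ∈ K' := by
          intro v w hadj
          rcases hKcov v w hadj with h | h
          · exact key v w hadj h
          · exact (key w v (hsymm v w hadj) h).symm
        have hK'card : K'.card < K.card := by
          have h1 : K'.card ≤ (K \ s).card + (s.biUnion t).card := Finset.card_union_le _ _
          have h2 : (K \ s).card = K.card - s.card := Finset.card_sdiff_of_subset hsK
          have h3 : s.card ≤ K.card := Finset.card_le_card hsK
          omega
        have := hKmin K' (Finset.mem_filter.mpr ⟨Finset.mem_univ _, hK'cov⟩)
        omega
      · push_neg at hs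
        obtain ⟨v, hvs, hv⟩ := hs
        have huniv : (Finset.univ : Finset V) ⊆ s.biUnion t := by
          intro w _
          refine Finset.mem_biUnion.mpr ⟨v, hvs, ?_⟩
          rw [ht]; simp [hv]
        calc s.card ≤ Finset.univ.card := Finset.card_le_univ s
          _ ≤ (s.biUnion t).card := Finset.card_le_card huniv
    obtain ⟨f, hfinj, hf⟩ := (Finset.all_card_le_biUnion_card_iff_exists_injective t).mp hall
    refine ⟨f, hfinj, fun v hvK hSv => ?_⟩
    have hv : v ∈ K.filter (fun x => S x) := Finset.mem_filter.mpr ⟨hvK, hSv⟩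
    have := hf v
    rw [ht] at this
    simp only [hv, if_pos] at this
    have := Finset.mem_filter.mp this
    exact this.2
  obtain ⟨f, hfinj, hf⟩ := main Side hflip
  obtain ⟨g, hginj, hg⟩ := main (fun x => ¬ Side x) (fun v w h => by have := hflip v w h; tauto)
  refine ⟨K, f, g, hKcov, hfinj, hginj, hf, fun v hvK hSv => ?_⟩
  obtain ⟨h1, h2, h3⟩ := hg v hvK hSv
  exact ⟨h1, not_not.mp h2, h3⟩

private lemma no_three_chain {α : Type} [Fintype α] [PartialOrder α] (h : heightP α ≤ 2)
    {a b c : α} (hab : a < b) (hbc : b < c) : False := by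
  have hchain : IsChain (· ≤ ·) ({a, b, c} : Set α) := by
    intro x hx y hy hne
    simp only [Set.mem_insert_iff, Set.mem_singleton_iff] at hx hy
    rcases hx with rfl | rfl | rfl <;> rcases hy with rfl | rfl | rfl <;>
      first
        | exact (hne rfl).elim
        | exact Or.inl hab.le
        | exact Or.inr hab.le
        | exact Or.inl hbc.le
        | exact Or.inr hbc.le
        | exact Or.inl (hab.trans hbc).le
        | exact Or.inr (hab.trans hbc).le
  have hcard : ({a, b, c} : Set α).ncard = 3 :=
    Set.ncard_eq_three.mpr ⟨a, b, c, hab.ne, (hab.trans hbc).ne, hbc.ne, rfl⟩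
  have h3 : 3 ≤ heightP α := by
    apply le_csSup
    · refine ⟨Fintype.card α, ?_⟩
      rintro n ⟨C, -, rfl⟩
      have := Set.ncard_le_ncard (Set.subset_univ C) Set.finite_univ
      simpa [Set.ncard_univ, Nat.card_eq_fintype_card] using this
    · exact ⟨{a, b, c}, hchain, hcard⟩
  omega

private def PAdj {α β : Type} [PartialOrder α] [PartialOrder β] (v w : α × β) : Prop :=
  (v.1 = w.1 ∧ (v.2 < w.2 ∨ w.2 < v.2)) ∨ (v.2 = w.2 ∧ (v.1 < w.1 ∨ w.1 < v.1))

private lemma padj_symm {α β : Type} [PartialOrder α] [PartialOrder β] {v w : α × β}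
    (h : PAdj v w) : PAdj w v := by
  unfold PAdj at *; tauto

private lemma isChain_pair' {γ : Type} [PartialOrder γ] {x y : γ} (h : x ≤ y ∨ y ≤ x) :
    IsChain (· ≤ ·) ({x, y} : Set γ) := by
  intro a ha b hb hne
  simp only [Set.mem_insert_iff, Set.mem_singleton_iff] at ha hb
  rcases ha with rfl | rfl <;> rcases hb with rfl | rfl <;> tauto

private lemma singleton_isUnichain {α β : Type} [PartialOrder α] [PartialOrder β] (v : α × β) :
    IsUnichain ({v} : Set (α × β)) := by
  left
  refine ⟨v.1, {v.2}, Set.subsingleton_singleton.isChain, ?_⟩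
  ext ⟨a, b⟩
  simp [Prod.ext_iff]

private lemma pair_isUnichain {α β : Type} [PartialOrder α] [PartialOrder β] {v w : α × β}
    (h : PAdj v w) : IsUnichain ({v, w} : Set (α × β)) := by
  rcases h with ⟨h1, h2⟩ | ⟨h1, h2⟩
  · left
    refine ⟨v.1, {v.2, w.2}, isChain_pair' (by rcases h2 with h | h; exacts [Or.inl h.le, Or.inr h.le]), ?_⟩
    ext ⟨a, b⟩
    simp only [Set.mem_insert_iff, Set.mem_singleton_iff, Set.mem_prod, Prod.ext_iff]
    constructor
    · rintro (⟨rfl, rfl⟩ | ⟨rfl, rfl⟩) <;> simp [h1]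
    · rintro ⟨rfl, rfl | rfl⟩
      · exact Or.inl ⟨rfl, rfl⟩
      · exact Or.inr ⟨h1, rfl⟩
  · right
    refine ⟨v.2, {v.1, w.1}, isChain_pair' (by rcases h2 with h | h; exacts [Or.inl h.le, Or.inr h.le]), ?_⟩
    ext ⟨a, b⟩
    simp only [Set.mem_insert_iff, Set.mem_singleton_iff, Set.mem_prod, Prod.ext_iff]
    constructor
    · rintro (⟨rfl, rfl⟩ | ⟨rfl, rfl⟩) <;> simp [h1]
    · rintro ⟨rfl | rfl, rfl⟩
      · exact Or.inl ⟨rfl, rfl⟩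
      · exact Or.inr ⟨rfl, h1⟩
  
private lemma padj_of_mem_unichain {α β : Type} [PartialOrder α] [PartialOrder β]
    {U : Set (α × β)} (hU : IsUnichain U) {v w : α × β} (hv : v ∈ U) (hw : w ∈ U)
    (hne : v ≠ w) : PAdj v w := by
  rcases hU with ⟨p, C, hC, rfl⟩ | ⟨q, C, hC, rfl⟩
  · obtain ⟨hv1, hv2⟩ := hv
    obtain ⟨hw1, hw2⟩ := hw
    simp only [Set.mem_singleton_iff] at hv1 hw1
    have h1 : v.1 = w.1 := hv1.trans hw1.symm
    have h2 : v.2 ≠ w.2 := fun h => hne (Prod.ext h1 h)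
    rcases hC hv2 hw2 h2 with h | h
    · exact Or.inl ⟨h1, Or.inl (lt_of_le_of_ne h h2)⟩
    · exact Or.inl ⟨h1, Or.inr (lt_of_le_of_ne h h2.symm)⟩
  · obtain ⟨hv1, hv2⟩ := hv
    obtain ⟨hw1, hw2⟩ := hw
    simp only [Set.mem_singleton_iff] at hv2 hw2
    have h1 : v.2 = w.2 := hv2.trans hw2.symm
    have h2 : v.1 ≠ w.1 := fun h => hne (Prod.ext h h1)
    rcases hC hv1 hw1 h2 with h | h
    · exact Or.inr ⟨h1, Or.inl (lt_of_le_of_ne h h2)⟩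
    · exact Or.inr ⟨h1, Or.inr (lt_of_le_of_ne h h2.symm)⟩

private def PSide {α β : Type} [PartialOrder α] [PartialOrder β] (v : α × β) : Prop :=
  (∃ a, a < v.1) ↔ (∃ b, b < v.2)

private lemma pside_flip {α β : Type} [Fintype α] [PartialOrder α] [Fintype β] [PartialOrder β]
    (hα : heightP α ≤ 2) (hβ : heightP β ≤ 2) {v w : α × β} (h : PAdj v w) :
    (PSide v ↔ ¬ PSide w) := by
  rcases h with ⟨h1, h2 | h2⟩ | ⟨h1, h2 | h2⟩
  · have hv : ¬ ∃ b, b < v.2 := fun ⟨b, hb⟩ => no_three_chain hβ hb h2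
    have hw : ∃ b, b < w.2 := ⟨v.2, h2⟩
    unfold PSide; rw [h1]; tauto
  · have hw : ¬ ∃ b, b < w.2 := fun ⟨b, hb⟩ => no_three_chain hβ hb h2
    have hv : ∃ b, b < v.2 := ⟨w.2, h2⟩
    unfold PSide; rw [h1]; tauto
  · have hv : ¬ ∃ a, a < v.1 := fun ⟨a, ha⟩ => no_three_chain hα ha h2
    have hw : ∃ a, a < w.1 := ⟨v.1, h2⟩
    unfold PSide; rw [h1]; tauto
  · have hw : ¬ ∃ a, a < w.1 := fun ⟨a, ha⟩ => no_three_chain hα ha h2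
    have hv : ∃ a, a < v.1 := ⟨w.1, h2⟩
    unfold PSide; rw [h1]; tauto


private lemma cover_mem_of_finset {α β : Type} [Fintype α] [PartialOrder α] [Fintype β]
    [PartialOrder β] (I : Finset (α × β)) (u : α × β → Set (α × β))
    (hu : ∀ i ∈ I, IsUnichain (u i)) (hcov : (⋃ i ∈ I, u i) = Set.univ) :
    I.card ∈ {m | ∃ U : Fin m → Set (α × β), (∀ i, IsUnichain (U i)) ∧ (⋃ i, U i) = Set.univ} := by
  refine ⟨fun j => u ((I.equivFin.symm j : {x // x ∈ I}) : α × β),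
    fun j => hu _ (I.equivFin.symm j).2, ?_⟩
  rw [← hcov]
  ext v
  simp only [Set.mem_iUnion]
  constructor
  · rintro ⟨j, hj⟩
    exact ⟨_, (I.equivFin.symm j).2, hj⟩
  · rintro ⟨i, hi, hv⟩
    refine ⟨I.equivFin ⟨i, hi⟩, ?_⟩
    rw [Equiv.symm_apply_apply]
    exact hv

/-- If `P` and `Q` are finite posets of height at most `2`, then the maximum
size of a semiantichain in `P × Q` equals the minimum number of unichains
needed to cover `P × Q`. -/
theorem semiantichain_unichain_duality_of_height_le_two
    (α β : Type) [Fintype α] [PartialOrder α] [Fintype β] [PartialOrder β]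
    (hα : heightP α ≤ 2) (hβ : heightP β ≤ 2) :
    maxSemiantichain α β = minUnichainCover α β := by
  classical
  unfold maxSemiantichain minUnichainCover
  set n := Fintype.card (α × β) with hn
  obtain ⟨K, f, g, hKcov, hfinj, hginj, hf, hg⟩ :=
    konig_matching (V := α × β) PAdj (fun v w h => padj_symm h) PSide
      (fun v w h => pside_flip hα hβ h)
  -- the semiantichain: complement of the vertex cover
  have hSsemi : IsSemiantichain (((Finset.univ \ K : Finset (α × β)) : Set (α × β))) := by
    intro x hx y hy hne U hU
    rintro ⟨hxU, hyU⟩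
    have hadj := padj_of_mem_unichain hU hxU hyU hne
    rw [Finset.mem_coe, Finset.mem_sdiff] at hx hy
    rcases hKcov x y hadj with h | h
    · exact hx.2 h
    · exact hy.2 h
  have hScard : (((Finset.univ \ K : Finset (α × β)) : Set (α × β))).ncard = n - K.card := by
    rw [Set.ncard_coe_finset, Finset.card_sdiff_of_subset (Finset.subset_univ K), Finset.card_univ]
  -- the unichain cover
  set KL := K.filter (fun v => PSide v) with hKL
  set KR := K.filter (fun v => ¬ PSide v) with hKR
  have hfKL : ∀ v ∈ KL, PAdj v (f v) ∧ ¬ PSide (f v) ∧ f v ∉ K := fun v hv =>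
    hf v (Finset.mem_filter.mp hv).1 (Finset.mem_filter.mp hv).2
  have hgKR : ∀ v ∈ KR, PAdj v (g v) ∧ PSide (g v) ∧ g v ∉ K := fun v hv =>
    hg v (Finset.mem_filter.mp hv).1 (Finset.mem_filter.mp hv).2
  set D := KL ∪ KR ∪ KL.image f ∪ KR.image g with hD
  set I := K ∪ (Finset.univ \ D) with hI
  set u : α × β → Set (α × β) := fun i =>
    if i ∈ KL then {i, f i} else if i ∈ KR then {i, g i} else {i} with hu
  have huni : ∀ i ∈ I, IsUnichain (u i) := by
    intro i _
    rw [hu]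
    by_cases h1 : i ∈ KL
    · simp only [h1, if_pos]
      exact pair_isUnichain (hfKL i h1).1
    · by_cases h2 : i ∈ KR
      · simp only [h1, if_neg, if_pos, h2, ite_false, ite_true]
        exact pair_isUnichain (hgKR i h2).1
      · simp only [h1, h2, ite_false]
        exact singleton_isUnichain i
  have hKLR : KL ∪ KR = K := Finset.filter_union_filter_not_eq _ K
  have hKsubD : K ⊆ D := by
    rw [hD, ← hKLR]
    intro a ha
    exact Finset.mem_union_left _ (Finset.mem_union_left _ ha)
  have hcovI : (⋃ i ∈ I, u i) = Set.univ := by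
    apply Set.eq_univ_of_forall
    intro v
    simp only [Set.mem_iUnion]
    by_cases hvK : v ∈ K
    · refine ⟨v, Finset.mem_union_left _ hvK, ?_⟩
      rw [hu]
      by_cases hvS : PSide v
      · have hvKL : v ∈ KL := Finset.mem_filter.mpr ⟨hvK, hvS⟩
        simp only [hvKL, if_pos]
        exact Set.mem_insert _ _
      · have hvKL : v ∉ KL := fun h => hvS (Finset.mem_filter.mp h).2
        have hvKR : v ∈ KR := Finset.mem_filter.mpr ⟨hvK, hvS⟩
        simp only [hvKL, hvKR, ite_false, ite_true]
        exact Set.mem_insert _ _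
    · by_cases hvD : v ∈ D
      · have : v ∈ KL.image f ∨ v ∈ KR.image g := by
          rw [hD] at hvD
          rcases Finset.mem_union.mp hvD with h | h
          · rcases Finset.mem_union.mp h with h' | h'
            · rcases Finset.mem_union.mp h' with h'' | h''
              · exact absurd ((Finset.mem_filter.mp h'').1) hvK
              · exact absurd ((Finset.mem_filter.mp h'').1) hvK
            · exact Or.inl h'
          · exact Or.inr h
        rcases this with h | h
        · obtain ⟨k, hk, rfl⟩ := Finset.mem_image.mp h
          refine ⟨k, Finset.mem_union_left _ (Finset.mem_filter.mp hk).1, ?_⟩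
          rw [hu]
          simp only [hk, if_pos]
          exact Set.mem_insert_iff.mpr (Or.inr rfl)
        · obtain ⟨k, hk, rfl⟩ := Finset.mem_image.mp h
          have hkKL : k ∉ KL := fun h' => (Finset.mem_filter.mp hk).2 (Finset.mem_filter.mp h').2
          refine ⟨k, Finset.mem_union_left _ (Finset.mem_filter.mp hk).1, ?_⟩
          rw [hu]
          simp only [hkKL, hk, ite_false, ite_true]
          exact Set.mem_insert_iff.mpr (Or.inr rfl)
      · refine ⟨v, Finset.mem_union_right _ (Finset.mem_sdiff.mpr ⟨Finset.mem_univ _, hvD⟩), ?_⟩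
        have hvKL : v ∉ KL := fun h => hvK (Finset.mem_filter.mp h).1
        have hvKR : v ∉ KR := fun h => hvK (Finset.mem_filter.mp h).1
        rw [hu]
        simp only [hvKL, hvKR, ite_false]
        exact Set.mem_singleton _
  -- cardinality of D
  have hdisj1 : Disjoint (KL ∪ KR) (KL.image f) := by
    rw [Finset.disjoint_left]
    intro a ha haf
    obtain ⟨k, hk, rfl⟩ := Finset.mem_image.mp haf
    rw [hKLR] at ha
    exact (hfKL k hk).2.2 ha
  have hdisj2 : Disjoint (KL ∪ KR ∪ KL.image f) (KR.image g) := by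
    rw [Finset.disjoint_left]
    intro a ha hag
    obtain ⟨k, hk, rfl⟩ := Finset.mem_image.mp hag
    rcases Finset.mem_union.mp ha with h | h
    · rw [hKLR] at h
      exact (hgKR k hk).2.2 h
    · obtain ⟨k', hk', he⟩ := Finset.mem_image.mp h
      exact (hfKL k' hk').2.1 (he ▸ (hgKR k hk).2.1)
  have hdisj0 : Disjoint KL KR := by
    rw [Finset.disjoint_left]
    intro a ha ha'
    exact (Finset.mem_filter.mp ha').2 (Finset.mem_filter.mp ha).2
  have hDcard : D.card = 2 * K.card := by
    rw [hD, Finset.card_union_of_disjoint hdisj2, Finset.card_union_of_disjoint hdisj1,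
      Finset.card_union_of_disjoint hdisj0,
      Finset.card_image_of_injective _ hfinj, Finset.card_image_of_injective _ hginj]
    have := Finset.card_filter_add_card_filter_not (s := K) (p := fun v => PSide v)
    rw [← hKL, ← hKR] at this
    omega
  have hDle : D.card ≤ n := by
    rw [hn]
    exact Finset.card_le_univ D
  have hIcard : I.card = n - K.card := by
    have hdisjI : Disjoint K (Finset.univ \ D) := by
      rw [Finset.disjoint_left]
      intro a ha ha'
      exact (Finset.mem_sdiff.mp ha').2 (hKsubD ha)
    rw [hI, Finset.card_union_of_disjoint hdisjI,
      Finset.card_sdiff_of_subset (Finset.subset_univ D), Finset.card_univ, ← hn]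
    omega
  -- bounds
  have hmem := cover_mem_of_finset I u huni hcovI
  rw [hIcard] at hmem
  have hmin_le : sInf {m | ∃ U : Fin m → Set (α × β),
      (∀ i, IsUnichain (U i)) ∧ (⋃ i, U i) = Set.univ} ≤ n - K.card := Nat.sInf_le hmem
  have hbdd : BddAbove {m | ∃ S : Set (α × β), IsSemiantichain S ∧ S.ncard = m} := by
    refine ⟨n, ?_⟩
    rintro m ⟨S, -, rfl⟩
    have := Set.ncard_le_ncard (Set.subset_univ S) Set.finite_univ
    simpa [Set.ncard_univ, Nat.card_eq_fintype_card, ← hn] using this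
  have hmax_ge : n - K.card ≤ sSup {m | ∃ S : Set (α × β), IsSemiantichain S ∧ S.ncard = m} :=
    le_csSup hbdd ⟨_, hSsemi, hScard⟩
  -- weak duality
  have hSAne : {m | ∃ S : Set (α × β), IsSemiantichain S ∧ S.ncard = m}.Nonempty :=
    ⟨0, ∅, by intro x hx; exact absurd hx (Set.notMem_empty x), Set.ncard_empty _⟩
  have hUCne : {m | ∃ U : Fin m → Set (α × β),
      (∀ i, IsUnichain (U i)) ∧ (⋃ i, U i) = Set.univ}.Nonempty := ⟨_, hmem⟩
  obtain ⟨S₀, hS₀, hS₀card⟩ := Nat.sSup_mem hSAne hbdd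
  obtain ⟨U₀, hU₀uni, hU₀cov⟩ := Nat.sInf_mem hUCne
  have hweak : sSup {m | ∃ S : Set (α × β), IsSemiantichain S ∧ S.ncard = m} ≤
      sInf {m | ∃ U : Fin m → Set (α × β),
        (∀ i, IsUnichain (U i)) ∧ (⋃ i, U i) = Set.univ} := by
    rw [← hS₀card]
    have hex : ∀ v : α × β, ∃ i, v ∈ U₀ i := by
      intro v
      have : v ∈ (⋃ i, U₀ i) := by rw [hU₀cov]; exact Set.mem_univ v
      exact Set.mem_iUnion.mp this
    choose φ hφ using hex
    have hle : S₀.ncard ≤ (Set.univ : Set (Fin (sInf {m | ∃ U : Fin m → Set (α × β),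
        (∀ i, IsUnichain (U i)) ∧ (⋃ i, U i) = Set.univ}))).ncard := by
      apply Set.ncard_le_ncard_of_injOn φ (fun a _ => Set.mem_univ _)
      · intro x hx y hy hxy
        by_contra hne
        refine hS₀ x hx y hy hne (U₀ (φ x)) (hU₀uni (φ x)) ⟨hφ x, ?_⟩
        rw [hxy]
        exact hφ y
    simpa [Set.ncard_univ, Nat.card_eq_fintype_card] using hle
  exact le_antisymm hweak (hmin_le.trans hmax_ge)
end

section
/- If finite posets P and Q are both d-decomposable, with heights h(P) and h(Q), then the product P×Q contains a semiantichain of size ∑_{i=1}^{min(h(P),h(Q))} μ_i^P·μ_i^Q. -/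
lemma ncard_prod' {α β : Type*} (s : Set α) (t : Set β) :
    (s ×ˢ t).ncard = s.ncard * t.ncard := by
  rw [← Nat.card_coe_set_eq, ← Nat.card_coe_set_eq, ← Nat.card_coe_set_eq,
    ← Nat.card_prod]
  exact Nat.card_congr (Equiv.Set.prod s t)

lemma ncard_biUnion_lt {γ : Type*} (s : ℕ → Set γ) (hfin : ∀ i, (s i).Finite)
    (hdisj : ∀ i j, i ≠ j → Disjoint (s i) (s j)) (n : ℕ) :
    (⋃ i, ⋃ (_ : i < n), s i).ncard = ∑ i ∈ Finset.range n, (s i).ncard := by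
  induction n with
  | zero => simp
  | succ n ih =>
    have : (⋃ i, ⋃ (_ : i < n + 1), s i) = (⋃ i, ⋃ (_ : i < n), s i) ∪ s n := by
      ext x
      simp only [Set.mem_iUnion, Set.mem_union]
      constructor
      · rintro ⟨i, hi, hx⟩
        rcases Nat.lt_succ_iff_lt_or_eq.1 hi with h | rfl
        · exact Or.inl ⟨i, h, hx⟩
        · exact Or.inr hx
      · rintro (⟨i, hi, hx⟩ | hx)
        · exact ⟨i, hi.trans (Nat.lt_succ_self n), hx⟩
        · exact ⟨n, Nat.lt_succ_self n, hx⟩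
    rw [this, Set.ncard_union_eq ?_ ?_ (hfin n), ih, Finset.sum_range_succ]
    · exact Set.disjoint_iUnion_left.2 fun i => Set.disjoint_iUnion_left.2
        fun hi => hdisj i n hi.ne
    · exact Set.Finite.biUnion (Set.finite_Iio n) fun i _ => hfin i

section Extend

variable {γ : Type*} [PartialOrder γ]

/-- Extend a `Fin n`-indexed family to `ℕ`. -/
noncomputable def extFam {n : ℕ} (A : Fin n → Set γ) (i : ℕ) : Set γ :=
  if h : i < n then A ⟨i, h⟩ else ∅

lemma extFam_disjoint {n : ℕ} (A : Fin n → Set γ)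
    (hd : ∀ i j, i ≠ j → Disjoint (A i) (A j)) :
    ∀ i j, i ≠ j → Disjoint (extFam A i) (extFam A j) := by
  intro i j hij
  unfold extFam
  split_ifs with h1 h2 h2
  · exact hd _ _ (by simp [Fin.ext_iff, hij])
  · exact Set.disjoint_empty _
  · exact Set.empty_disjoint _
  · exact Set.disjoint_empty _

lemma extFam_anti {n : ℕ} (A : Fin n → Set γ)
    (ha : ∀ i, IsAntichain (· ≤ ·) (A i)) (i : ℕ) :
    IsAntichain (· ≤ ·) (extFam A i) := by
  unfold extFam
  split_ifs with h
  · exact ha _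
  · exact fun x hx => absurd hx (Set.notMem_empty x)

lemma extFam_union {n : ℕ} (A : Fin n → Set γ) (k : ℕ) (hk : k ≤ n) :
    (⋃ i : Fin n, ⋃ (_ : (i : ℕ) < k), A i) = ⋃ i, ⋃ (_ : i < k), extFam A i := by
  ext x
  simp only [Set.mem_iUnion]
  constructor
  · rintro ⟨i, hi, hx⟩
    exact ⟨i, hi, by simpa [extFam, i.isLt] using hx⟩
  · rintro ⟨i, hi, hx⟩
    have hin : i < n := hi.trans_le hk
    exact ⟨⟨i, hin⟩, hi, by simpa [extFam, hin] using hx⟩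

end Extend

/-- If finite posets `P` and `Q` are both d-decomposable, then `P × Q` contains
a (decomposable) semiantichain of size
`∑_{i=1}^{min(h(P),h(Q))} μ_i^P μ_i^Q`, where `μ_i = d_i - d_{i-1}`. -/
theorem exists_semiantichain_of_dDecomposable
    (α β : Type) [Fintype α] [PartialOrder α] [Fintype β] [PartialOrder β]
    (hP : DDecomposable α) (hQ : DDecomposable β) :
    ∃ S : Set (α × β), IsSemiantichain S ∧
      S.ncard = ∑ i ∈ Finset.range (min (heightP α) (heightP β)),
        (dk α (i + 1) - dk α i) * (dk β (i + 1) - dk β i) := by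
  obtain ⟨A, hAa, hAd, -, hAc⟩ := hP
  obtain ⟨B, hBa, hBd, -, hBc⟩ := hQ
  set m := min (heightP α) (heightP β) with hm
  set s := extFam A with hs
  set t := extFam B with ht
  have hsd := extFam_disjoint A hAd
  have htd := extFam_disjoint B hBd
  have hsa := extFam_anti A hAa
  have hta := extFam_anti B hBa
  -- cumulative cardinalities
  have hscard : ∀ k ≤ heightP α, ∑ i ∈ Finset.range k, (s i).ncard = dk α k := by
    intro k hk
    rw [← ncard_biUnion_lt s (fun i => Set.toFinite _) hsd, ← extFam_union A k hk, hAc k hk]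
  have htcard : ∀ k ≤ heightP β, ∑ i ∈ Finset.range k, (t i).ncard = dk β k := by
    intro k hk
    rw [← ncard_biUnion_lt t (fun i => Set.toFinite _) htd, ← extFam_union B k hk, hBc k hk]
  have hsmu : ∀ i < heightP α, (s i).ncard = dk α (i + 1) - dk α i := by
    intro i hi
    rw [← hscard (i + 1) hi, ← hscard i hi.le, Finset.sum_range_succ]
    omega
  have htmu : ∀ i < heightP β, (t i).ncard = dk β (i + 1) - dk β i := by
    intro i hi
    rw [← htcard (i + 1) hi, ← htcard i hi.le, Finset.sum_range_succ]
    omega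
  refine ⟨⋃ i, ⋃ (_ : i < m), s i ×ˢ t i, ?_, ?_⟩
  · rintro x hx y hy hxy U hU ⟨hxU, hyU⟩
    simp only [Set.mem_iUnion] at hx hy
    obtain ⟨i, hi, hxi1, hxi2⟩ := hx
    obtain ⟨j, hj, hyj1, hyj2⟩ := hy
    rcases hU with ⟨p, C, hC, rfl⟩ | ⟨q, C, hC, rfl⟩
    · obtain ⟨hx1, hx2⟩ := hxU
      obtain ⟨hy1, hy2⟩ := hyU
      simp only [Set.mem_singleton_iff] at hx1 hy1
      have hij : i = j := by
        by_contra h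
        exact (hsd i j h).ne_of_mem hxi1 hyj1 (hx1.trans hy1.symm)
      subst hij
      have h2 : x.2 = y.2 := by
        by_contra h2
        rcases hC.total hx2 hy2 with h | h
        · exact hta i hxi2 hyj2 h2 h
        · exact hta i hyj2 hxi2 (Ne.symm h2) h
      exact hxy (Prod.ext (hx1.trans hy1.symm) h2)
    · obtain ⟨hx1, hx2⟩ := hxU
      obtain ⟨hy1, hy2⟩ := hyU
      simp only [Set.mem_singleton_iff] at hx2 hy2
      have hij : i = j := by
        by_contra h
        exact (htd i j h).ne_of_mem hxi2 hyj2 (hx2.trans hy2.symm)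
      subst hij
      have h1 : x.1 = y.1 := by
        by_contra h1
        rcases hC.total hx1 hy1 with h | h
        · exact hsa i hxi1 hyj1 h1 h
        · exact hsa i hyj1 hxi1 (Ne.symm h1) h
      exact hxy (Prod.ext h1 (hx2.trans hy2.symm))
  · rw [ncard_biUnion_lt (fun i => s i ×ˢ t i) (fun i => Set.toFinite _) ?_ m]
    · refine Finset.sum_congr rfl fun i hi => ?_
      rw [Finset.mem_range] at hi
      rw [ncard_prod', hsmu i (hi.trans_le (min_le_left _ _)),
        htmu i (hi.trans_le (min_le_right _ _))]
    · intro i j hij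
      have := hsd i j hij
      rw [Set.disjoint_left] at this ⊢
      rintro ⟨a, b⟩ ⟨ha, -⟩ ⟨ha', -⟩
      exact this ha ha'
end

section
/- If finite posets P and P' are both d-decomposable, then their series composition P*P' and their parallel composition P+P' are d-decomposable; if P and P' are both c-decomposable, then P*P' and P+P' are c-decomposable. -/
namespace SPaux


/-! ### Generic `fge` layer -/

variable {γ : Type*}

noncomputable def fge (G : Set γ → Prop) (k : ℕ) : ℕ :=
  sSup {n | ∃ F : Fin k → Set γ, (∀ i, G (F i)) ∧ (⋃ i, F i).ncard = n}

theorem fge_bddAbove [Finite γ] (G : Set γ → Prop) (k : ℕ) :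
    BddAbove {n | ∃ F : Fin k → Set γ, (∀ i, G (F i)) ∧ (⋃ i, F i).ncard = n} := by
  refine ⟨Nat.card γ, ?_⟩
  rintro n ⟨F, -, rfl⟩
  exact le_trans (Set.ncard_le_ncard (Set.subset_univ _) Set.finite_univ)
    (le_of_eq (Set.ncard_univ γ))

theorem le_fge [Finite γ] {G : Set γ → Prop} {k : ℕ} (F : Fin k → Set γ)
    (hF : ∀ i, G (F i)) : (⋃ i, F i).ncard ≤ fge G k :=
  le_csSup (fge_bddAbove G k) ⟨F, hF, rfl⟩

theorem fge_exists [Finite γ] {G : Set γ → Prop} (hG : G ∅) (k : ℕ) :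
    ∃ F : Fin k → Set γ, (∀ i, G (F i)) ∧ (⋃ i, F i).ncard = fge G k := by
  have hne : {n | ∃ F : Fin k → Set γ, (∀ i, G (F i)) ∧ (⋃ i, F i).ncard = n}.Nonempty :=
    ⟨_, fun _ => ∅, fun _ => hG, rfl⟩
  exact Nat.sSup_mem hne (fge_bddAbove G k)

theorem fge_le_card [Finite γ] (G : Set γ → Prop) (k : ℕ) : fge G k ≤ Nat.card γ := by
  refine csSup_le' ?_
  rintro n ⟨F, -, rfl⟩
  exact le_trans (Set.ncard_le_ncard (Set.subset_univ _) Set.finite_univ)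
    (le_of_eq (Set.ncard_univ γ))

theorem fge_mono [Finite γ] {G : Set γ → Prop} (hG : G ∅) {k l : ℕ} (hkl : k ≤ l) :
    fge G k ≤ fge G l := by
  obtain ⟨F, hF, hcard⟩ := fge_exists hG k
  rw [← hcard]
  have := le_fge (G := G) (fun i : Fin l => if h : (i : ℕ) < k then F ⟨i, h⟩ else ∅)
    (fun i => by split <;> [exact hF _; exact hG])
  refine le_trans (le_of_eq ?_) this
  congr 1
  ext x
  simp only [Set.mem_iUnion]
  constructor
  · rintro ⟨i, hx⟩
    exact ⟨⟨i, lt_of_lt_of_le i.2 hkl⟩, by simp [i.2, hx]⟩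
  · rintro ⟨i, hx⟩
    by_cases h : (i : ℕ) < k
    · exact ⟨⟨i, h⟩, by simpa [h] using hx⟩
    · simp [h] at hx

theorem fge_zero (G : Set γ → Prop) : fge G 0 = 0 := by
  have : {n | ∃ F : Fin 0 → Set γ, (∀ i, G (F i)) ∧ (⋃ i, F i).ncard = n} = {0} := by
    ext n
    constructor
    · rintro ⟨F, -, rfl⟩; simp
    · rintro rfl; exact ⟨Fin.elim0, fun i => i.elim0, by simp⟩
  rw [fge, this, csSup_singleton]

theorem fge_one (G : Set γ → Prop) :
    fge G 1 = sSup {n | ∃ C : Set γ, G C ∧ C.ncard = n} := by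
  unfold fge
  congr 1
  ext n
  constructor
  · rintro ⟨F, hF, rfl⟩
    refine ⟨F 0, hF 0, ?_⟩
    congr 1
    ext x
    simp only [Set.mem_iUnion]
    constructor
    · intro h
      exact ⟨0, h⟩
    · rintro ⟨i, h⟩
      fin_cases i
      exact h
  · rintro ⟨C, hC, rfl⟩
    exact ⟨fun _ => C, fun _ => hC, by rw [Set.iUnion_const]⟩

theorem fge_comp_equiv {δ : Type*} (e : γ ≃ δ) (G : Set δ → Prop) (k : ℕ) :
    fge (fun S : Set γ => G (e '' S)) k = fge G k := by
  unfold fge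
  congr 1
  ext n
  constructor
  · rintro ⟨F, hF, rfl⟩
    refine ⟨fun i => e '' F i, hF, ?_⟩
    rw [← Set.image_iUnion, Set.ncard_image_of_injective _ e.injective]
  · rintro ⟨F, hF, rfl⟩
    refine ⟨fun i => e ⁻¹' F i, fun i => by simpa [Set.image_preimage_eq _ e.surjective] using hF i, ?_⟩
    rw [← Set.preimage_iUnion, ← Set.ncard_image_of_injective _ e.injective,
      Set.image_preimage_eq _ e.surjective]



/-! ### Numeric greedy merge layer -/

def pre (u : ℕ → ℕ) : ℕ → ℕ
  | 0 => 0
  | k + 1 => pre u k + u k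

def gpath (u v : ℕ → ℕ) : ℕ → ℕ × ℕ
  | 0 => (0, 0)
  | k + 1 =>
    let p := gpath u v k
    if v p.2 ≤ u p.1 then (p.1 + 1, p.2) else (p.1, p.2 + 1)

theorem pre_mono (u : ℕ → ℕ) : Monotone (pre u) := by
  refine monotone_nat_of_le_succ fun k => ?_
  simp [pre]

theorem pre_stab (u : ℕ → ℕ) {m : ℕ} (h0 : ∀ i, m ≤ i → u i = 0) :
    ∀ k, m ≤ k → pre u k = pre u m := by
  intro k hk
  induction k with
  | zero =>
    have hm : m = 0 := by omega
    rw [hm]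
  | succ n ih =>
    rcases Nat.lt_or_ge m (n + 1) with h | h
    · have hmn : m ≤ n := by omega
      rw [pre, h0 n hmn, ih hmn]
      omega
    · have hm : m = n + 1 := by omega
      rw [hm]

theorem gpath_sum (u v : ℕ → ℕ) : ∀ k, (gpath u v k).1 + (gpath u v k).2 = k := by
  intro k
  induction k with
  | zero => rfl
  | succ n ih =>
    rw [gpath]
    split <;> simp <;> omega

theorem gpath_fst_mono (u v : ℕ → ℕ) : Monotone fun k => (gpath u v k).1 := by
  refine monotone_nat_of_le_succ fun k => ?_
  rw [gpath]
  split <;> simp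

theorem gpath_snd_mono (u v : ℕ → ℕ) : Monotone fun k => (gpath u v k).2 := by
  refine monotone_nat_of_le_succ fun k => ?_
  rw [gpath]
  split <;> simp

theorem gpath_opt (u v : ℕ → ℕ) (hu : ∀ ⦃i j : ℕ⦄, i ≤ j → u j ≤ u i)
    (hv : ∀ ⦃i j : ℕ⦄, i ≤ j → v j ≤ v i) :
    ∀ k i j, i + j = k →
      pre u i + pre v j ≤ pre u (gpath u v k).1 + pre v (gpath u v k).2 := by
  intro k
  induction k with
  | zero =>
    intro i j hij
    obtain ⟨rfl, rfl⟩ : i = 0 ∧ j = 0 := by omega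
    simp [gpath]
  | succ n ih =>
    intro i j hij
    have hsum := gpath_sum u v n
    set a := (gpath u v n).1 with ha
    set b := (gpath u v n).2 with hb
    have hg : gpath u v (n + 1) = if v b ≤ u a then (a + 1, b) else (a, b + 1) := by
      rw [gpath]
    by_cases hvu : v b ≤ u a
    · rw [hg, if_pos hvu]
      by_cases hi : a + 1 ≤ i
      · have h1 : (i - 1) + j = n := by omega
        have := ih (i - 1) j h1
        have hui : u (i - 1) ≤ u a := hu (by omega)
        have hpi : pre u i = pre u (i - 1) + u (i - 1) := by
          have : i = (i - 1) + 1 := by omega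
          rw [this]; rfl
        simp only [pre]
        omega
      · -- i ≤ a, so j ≥ b + 1
        have hj : b + 1 ≤ j := by omega
        have h1 : i + (j - 1) = n := by omega
        have := ih i (j - 1) h1
        have hvj : v (j - 1) ≤ v b := hv (by omega)
        have hpj : pre v j = pre v (j - 1) + v (j - 1) := by
          have : j = (j - 1) + 1 := by omega
          rw [this]; rfl
        simp only [pre]
        omega
    · rw [hg, if_neg hvu]
      have hvu' : u a ≤ v b := le_of_not_ge hvu
      by_cases hj : b + 1 ≤ j
      · have h1 : i + (j - 1) = n := by omega
        have := ih i (j - 1) h1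
        have hvj : v (j - 1) ≤ v b := hv (by omega)
        have hpj : pre v j = pre v (j - 1) + v (j - 1) := by
          have : j = (j - 1) + 1 := by omega
          rw [this]; rfl
        simp only [pre]
        omega
      · have hi : a + 1 ≤ i := by omega
        have h1 : (i - 1) + j = n := by omega
        have := ih (i - 1) j h1
        have hui : u (i - 1) ≤ u a := hu (by omega)
        have hpi : pre u i = pre u (i - 1) + u (i - 1) := by
          have : i = (i - 1) + 1 := by omega
          rw [this]; rfl
        simp only [pre]
        omega

section bounds

variable (u v : ℕ → ℕ) (p q : ℕ)
variable (hu1 : ∀ i, i < p → 1 ≤ u i) (hu0 : ∀ i, p ≤ i → u i = 0)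
variable (hv1 : ∀ j, j < q → 1 ≤ v j) (hv0 : ∀ j, q ≤ j → v j = 0)

include hu0 hv1 hv0 in
theorem gpath_bound : ∀ k, k ≤ p + q → (gpath u v k).1 ≤ p ∧ (gpath u v k).2 ≤ q := by
  intro k
  induction k with
  | zero => simp [gpath]
  | succ n ih =>
    intro hn
    obtain ⟨h1, h2⟩ := ih (by omega)
    have hsum := gpath_sum u v n
    set a := (gpath u v n).1
    set b := (gpath u v n).2
    have hg : gpath u v (n + 1) = if v b ≤ u a then (a + 1, b) else (a, b + 1) := by
      rw [gpath]
    by_cases hvu : v b ≤ u a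
    · rw [hg, if_pos hvu]
      refine ⟨?_, by simpa using h2⟩
      simp only
      by_contra hc
      have hap : a = p := by omega
      have hua : u a = 0 := hu0 a (by omega)
      have hvb : v b = 0 := by omega
      have hbq : q ≤ b := by
        by_contra hbq
        have := hv1 b (by omega)
        omega
      omega
    · rw [hg, if_neg hvu]
      refine ⟨by simpa using h1, ?_⟩
      simp only
      have hvb : 1 ≤ v b := by omega
      have hbq : b < q := by
        by_contra hbq
        have := hv0 b (by omega)
        omega
      omega

include hu0 hv1 hv0 in
theorem gpath_step_lt : ∀ k, k < p + q →
    (v (gpath u v k).2 ≤ u (gpath u v k).1 → (gpath u v k).1 < p) ∧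
    (¬ v (gpath u v k).2 ≤ u (gpath u v k).1 → (gpath u v k).2 < q) := by
  intro k hk
  obtain ⟨h1, h2⟩ := gpath_bound u v p q hu0 hv1 hv0 k (by omega)
  have hsum := gpath_sum u v k
  set a := (gpath u v k).1
  set b := (gpath u v k).2
  constructor
  · intro hvu
    by_contra hc
    have hua : u a = 0 := hu0 a (by omega)
    have hvb : v b = 0 := by omega
    have hbq : q ≤ b := by
      by_contra hbq
      have := hv1 b (by omega)
      omega
    omega
  · intro hvu
    have hvb : 1 ≤ v b := by omega
    by_contra hc
    have := hv0 b (by omega)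
    omega

include hu0 hv1 hv0 in
theorem gpath_full :
    (gpath u v (p + q)).1 = p ∧ (gpath u v (p + q)).2 = q := by
  obtain ⟨h1, h2⟩ := gpath_bound u v p q hu0 hv1 hv0 (p + q) le_rfl
  have hsum := gpath_sum u v (p + q)
  omega

end bounds

theorem gpath_fst_hit (u v : ℕ → ℕ) :
    ∀ K n, n < (gpath u v K).1 →
      ∃ k < K, (gpath u v k).1 = n ∧ v (gpath u v k).2 ≤ u (gpath u v k).1 := by
  intro K
  induction K with
  | zero => intro n h; simp [gpath] at h
  | succ m ih =>
    intro n hn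
    have hg : gpath u v (m + 1) =
        if v (gpath u v m).2 ≤ u (gpath u v m).1
        then ((gpath u v m).1 + 1, (gpath u v m).2)
        else ((gpath u v m).1, (gpath u v m).2 + 1) := by rw [gpath]
    by_cases hvu : v (gpath u v m).2 ≤ u (gpath u v m).1
    · rw [hg, if_pos hvu] at hn
      simp only at hn
      rcases Nat.lt_or_ge n (gpath u v m).1 with h | h
      · obtain ⟨k, hk, hkn⟩ := ih n h
        exact ⟨k, by omega, hkn⟩
      · have : n = (gpath u v m).1 := by omega
        exact ⟨m, by omega, this.symm, hvu⟩
    · rw [hg, if_neg hvu] at hn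
      simp only at hn
      obtain ⟨k, hk, hkn⟩ := ih n hn
      exact ⟨k, by omega, hkn⟩

theorem gpath_snd_hit (u v : ℕ → ℕ) :
    ∀ K n, n < (gpath u v K).2 →
      ∃ k < K, (gpath u v k).2 = n ∧ ¬ v (gpath u v k).2 ≤ u (gpath u v k).1 := by
  intro K
  induction K with
  | zero => intro n h; simp [gpath] at h
  | succ m ih =>
    intro n hn
    have hg : gpath u v (m + 1) =
        if v (gpath u v m).2 ≤ u (gpath u v m).1
        then ((gpath u v m).1 + 1, (gpath u v m).2)
        else ((gpath u v m).1, (gpath u v m).2 + 1) := by rw [gpath]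
    by_cases hvu : v (gpath u v m).2 ≤ u (gpath u v m).1
    · rw [hg, if_pos hvu] at hn
      simp only at hn
      obtain ⟨k, hk, hkn⟩ := ih n hn
      exact ⟨k, by omega, hkn⟩
    · rw [hg, if_neg hvu] at hn
      simp only at hn
      rcases Nat.lt_or_ge n (gpath u v m).2 with h | h
      · obtain ⟨k, hk, hkn⟩ := ih n h
        exact ⟨k, by omega, hkn⟩
      · have : n = (gpath u v m).2 := by omega
        exact ⟨m, by omega, this.symm, hvu⟩



variable {α β : Type*} [PartialOrder α] [PartialOrder β]

/-- The lex order transported to the plain sum type. -/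
def lexLE (x y : α ⊕ β) : Prop := (toLex x : α ⊕ₗ β) ≤ toLex y

theorem lexLE_inl_inl {a b : α} : lexLE (Sum.inl a : α ⊕ β) (Sum.inl b) ↔ a ≤ b :=
  Sum.Lex.inl_le_inl_iff

theorem lexLE_inr_inr {a b : β} : lexLE (Sum.inr a : α ⊕ β) (Sum.inr b) ↔ a ≤ b :=
  Sum.Lex.inr_le_inr_iff

theorem lexLE_inl_inr (a : α) (b : β) : lexLE (Sum.inl a : α ⊕ β) (Sum.inr b) :=
  Sum.Lex.inl_le_inr a b

theorem not_lexLE_inr_inl (a : α) (b : β) : ¬ lexLE (Sum.inr b : α ⊕ β) (Sum.inl a) :=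
  Sum.Lex.not_inr_le_inl

/-- chains in the parallel sum are one-sided -/
theorem isChain_sum_iff {S : Set (α ⊕ β)} :
    IsChain (· ≤ ·) S ↔
      (∃ C : Set α, IsChain (· ≤ ·) C ∧ S = Sum.inl '' C) ∨
      (∃ C : Set β, IsChain (· ≤ ·) C ∧ S = Sum.inr '' C) := by
  constructor
  · intro hS
    by_cases h : ∀ x ∈ S, ∃ a, x = Sum.inl a
    · left
      refine ⟨Sum.inl ⁻¹' S, ?_, ?_⟩
      · intro a ha b hb hab
        rcases hS ha hb (by simp [hab]) with h' | h'
        · exact Or.inl (Sum.inl_le_inl_iff.1 h')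
        · exact Or.inr (Sum.inl_le_inl_iff.1 h')
      · ext x
        constructor
        · intro hx
          obtain ⟨a, rfl⟩ := h x hx
          exact ⟨a, hx, rfl⟩
        · rintro ⟨a, ha, rfl⟩
          exact ha
    · right
      push_neg at h
      obtain ⟨x, hxS, hx⟩ := h
      obtain b0 : β := by
        rcases x with a | b
        · exact absurd rfl (hx a)
        · exact b
      have hb0 : ∃ b : β, Sum.inr b ∈ S := by
        rcases x with a | b
        · exact absurd rfl (hx a)
        · exact ⟨b, hxS⟩
      obtain ⟨b0, hb0S⟩ := hb0
      have hall : ∀ y ∈ S, ∃ b, y = Sum.inr b := by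
        intro y hy
        rcases y with a | b
        · exfalso
          have hne : (Sum.inl a : α ⊕ β) ≠ Sum.inr b0 := by simp
          rcases hS hy hb0S hne with h' | h'
          · exact Sum.not_inl_le_inr h'
          · exact Sum.not_inr_le_inl h'
        · exact ⟨b, rfl⟩
      refine ⟨Sum.inr ⁻¹' S, ?_, ?_⟩
      · intro a ha b hb hab
        rcases hS ha hb (by simp [hab]) with h' | h'
        · exact Or.inl (Sum.inr_le_inr_iff.1 h')
        · exact Or.inr (Sum.inr_le_inr_iff.1 h')
      · ext y
        constructor
        · intro hy
          obtain ⟨b, rfl⟩ := hall y hy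
          exact ⟨b, hy, rfl⟩
        · rintro ⟨b, hb, rfl⟩
          exact hb
  · rintro (⟨C, hC, rfl⟩ | ⟨C, hC, rfl⟩)
    · rintro _ ⟨a, ha, rfl⟩ _ ⟨b, hb, rfl⟩ hab
      rcases hC ha hb (by rintro rfl; exact hab rfl) with h' | h'
      · exact Or.inl (Sum.inl_le_inl_iff.2 h')
      · exact Or.inr (Sum.inl_le_inl_iff.2 h')
    · rintro _ ⟨a, ha, rfl⟩ _ ⟨b, hb, rfl⟩ hab
      rcases hC ha hb (by rintro rfl; exact hab rfl) with h' | h'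
      · exact Or.inl (Sum.inr_le_inr_iff.2 h')
      · exact Or.inr (Sum.inr_le_inr_iff.2 h')

/-- antichains in the lex sum are one-sided -/
theorem isAntichain_lexLE_iff {S : Set (α ⊕ β)} :
    IsAntichain lexLE S ↔
      (∃ C : Set α, IsAntichain (· ≤ ·) C ∧ S = Sum.inl '' C) ∨
      (∃ C : Set β, IsAntichain (· ≤ ·) C ∧ S = Sum.inr '' C) := by
  constructor
  · intro hS
    by_cases h : ∀ x ∈ S, ∃ a, x = Sum.inl a
    · left
      refine ⟨Sum.inl ⁻¹' S, ?_, ?_⟩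
      · intro a ha b hb hab hle
        exact hS ha hb (by simp [hab]) (lexLE_inl_inl.2 hle)
      · ext x
        constructor
        · intro hx
          obtain ⟨a, rfl⟩ := h x hx
          exact ⟨a, hx, rfl⟩
        · rintro ⟨a, ha, rfl⟩
          exact ha
    · right
      push_neg at h
      obtain ⟨x, hxS, hx⟩ := h
      have hb0 : ∃ b : β, Sum.inr b ∈ S := by
        rcases x with a | b
        · exact absurd rfl (hx a)
        · exact ⟨b, hxS⟩
      obtain ⟨b0, hb0S⟩ := hb0
      have hall : ∀ y ∈ S, ∃ b, y = Sum.inr b := by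
        intro y hy
        rcases y with a | b
        · exact absurd (lexLE_inl_inr a b0) (hS hy hb0S (by simp))
        · exact ⟨b, rfl⟩
      refine ⟨Sum.inr ⁻¹' S, ?_, ?_⟩
      · intro a ha b hb hab hle
        exact hS ha hb (by simp [hab]) (lexLE_inr_inr.2 hle)
      · ext y
        constructor
        · intro hy
          obtain ⟨b, rfl⟩ := hall y hy
          exact ⟨b, hy, rfl⟩
        · rintro ⟨b, hb, rfl⟩
          exact hb
  · rintro (⟨C, hC, rfl⟩ | ⟨C, hC, rfl⟩)
    · rintro _ ⟨a, ha, rfl⟩ _ ⟨b, hb, rfl⟩ hab hle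
      exact hC ha hb (by rintro rfl; exact hab rfl) (lexLE_inl_inl.1 hle)
    · rintro _ ⟨a, ha, rfl⟩ _ ⟨b, hb, rfl⟩ hab hle
      exact hC ha hb (by rintro rfl; exact hab rfl) (lexLE_inr_inr.1 hle)

/-- antichains in the parallel sum restrict -/
theorem isAntichain_sum_iff {S : Set (α ⊕ β)} :
    IsAntichain (· ≤ ·) S ↔
      IsAntichain (· ≤ ·) (Sum.inl ⁻¹' S) ∧ IsAntichain (· ≤ ·) (Sum.inr ⁻¹' S) := by
  constructor
  · intro hS
    constructor
    · intro a ha b hb hab hle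
      exact hS ha hb (by simp [hab]) (Sum.inl_le_inl_iff.2 hle)
    · intro a ha b hb hab hle
      exact hS ha hb (by simp [hab]) (Sum.inr_le_inr_iff.2 hle)
  · rintro ⟨h1, h2⟩ x hx y hy hxy hle
    rcases x with a | a <;> rcases y with b | b
    · exact h1 hx hy (by rintro rfl; exact hxy rfl) (Sum.inl_le_inl_iff.1 hle)
    · exact Sum.not_inl_le_inr hle
    · exact Sum.not_inr_le_inl hle
    · exact h2 hx hy (by rintro rfl; exact hxy rfl) (Sum.inr_le_inr_iff.1 hle)

/-- chains in the lex sum restrict -/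
theorem isChain_lexLE_iff {S : Set (α ⊕ β)} :
    IsChain lexLE S ↔
      IsChain (· ≤ ·) (Sum.inl ⁻¹' S) ∧ IsChain (· ≤ ·) (Sum.inr ⁻¹' S) := by
  constructor
  · intro hS
    constructor
    · intro a ha b hb hab
      rcases hS ha hb (by simp [hab]) with h' | h'
      · exact Or.inl (lexLE_inl_inl.1 h')
      · exact Or.inr (lexLE_inl_inl.1 h')
    · intro a ha b hb hab
      rcases hS ha hb (by simp [hab]) with h' | h'
      · exact Or.inl (lexLE_inr_inr.1 h')
      · exact Or.inr (lexLE_inr_inr.1 h')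
  · rintro ⟨h1, h2⟩ x hx y hy hxy
    rcases x with a | a <;> rcases y with b | b
    · rcases h1 hx hy (by rintro rfl; exact hxy rfl) with h' | h'
      · exact Or.inl (lexLE_inl_inl.2 h')
      · exact Or.inr (lexLE_inl_inl.2 h')
    · exact Or.inl (lexLE_inl_inr a b)
    · exact Or.inr (lexLE_inl_inr b a)
    · rcases h2 hx hy (by rintro rfl; exact hxy rfl) with h' | h'
      · exact Or.inl (lexLE_inr_inr.2 h')
      · exact Or.inr (lexLE_inr_inr.2 h')

theorem isChain_toLex_image {S : Set (α ⊕ β)} :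
    IsChain (· ≤ ·) (toLex '' S : Set (α ⊕ₗ β)) ↔ IsChain lexLE S := by
  constructor
  · intro h a ha b hb hab
    rcases h (Set.mem_image_of_mem _ ha) (Set.mem_image_of_mem _ hb)
      (fun he => hab (toLex.injective he)) with h' | h'
    · exact Or.inl h'
    · exact Or.inr h'
  · rintro h _ ⟨a, ha, rfl⟩ _ ⟨b, hb, rfl⟩ hab
    rcases h ha hb (fun he => hab (congrArg toLex he)) with h' | h'
    · exact Or.inl h'
    · exact Or.inr h'

theorem isAntichain_toLex_image {S : Set (α ⊕ β)} :
    IsAntichain (· ≤ ·) (toLex '' S : Set (α ⊕ₗ β)) ↔ IsAntichain lexLE S := by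
  constructor
  · intro h a ha b hb hab hle
    exact h (Set.mem_image_of_mem _ ha) (Set.mem_image_of_mem _ hb)
      (fun he => hab (toLex.injective he)) hle
  · rintro h _ ⟨a, ha, rfl⟩ _ ⟨b, hb, rfl⟩ hab hle
    exact h ha hb (fun he => hab (congrArg toLex he)) hle


/-! ### prefUnion helpers -/

section prefUnion

variable {γ : Type*}

def prefUnion {m : ℕ} (F : Fin m → Set γ) (k : ℕ) : Set γ :=
  ⋃ i : Fin m, ⋃ (_ : (i : ℕ) < k), F i

theorem prefUnion_zero {m : ℕ} (F : Fin m → Set γ) : prefUnion F 0 = ∅ := by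
  simp [prefUnion]

theorem prefUnion_succ {m : ℕ} (F : Fin m → Set γ) {k : ℕ} (hk : k < m) :
    prefUnion F (k + 1) = prefUnion F k ∪ F ⟨k, hk⟩ := by
  ext x
  simp only [prefUnion, Set.mem_iUnion, Set.mem_union]
  constructor
  · rintro ⟨i, hik, hx⟩
    rcases Nat.lt_or_ge (i : ℕ) k with h | h
    · exact Or.inl ⟨i, h, hx⟩
    · have : (i : ℕ) = k := by omega
      refine Or.inr ?_
      have : i = ⟨k, hk⟩ := Fin.ext this
      rwa [← this]
  · rintro (⟨i, hik, hx⟩ | hx)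
    · exact ⟨i, by omega, hx⟩
    · exact ⟨⟨k, hk⟩, by simp, hx⟩

theorem prefUnion_of_le {m : ℕ} (F : Fin m → Set γ) {k : ℕ} (hk : m ≤ k) :
    prefUnion F k = ⋃ i, F i := by
  ext x
  simp only [prefUnion, Set.mem_iUnion]
  exact ⟨fun ⟨i, _, hx⟩ => ⟨i, hx⟩, fun ⟨i, hx⟩ => ⟨i, by omega, hx⟩⟩

theorem prefUnion_eq_iUnion_castLE {m : ℕ} (F : Fin m → Set γ) {k : ℕ} (hk : k ≤ m) :
    prefUnion F k = ⋃ t : Fin k, F (Fin.castLE hk t) := by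
  ext x
  simp only [prefUnion, Set.mem_iUnion]
  constructor
  · rintro ⟨i, hik, hx⟩
    exact ⟨⟨(i : ℕ), hik⟩, by simpa [Fin.castLE] using hx⟩
  · rintro ⟨t, hx⟩
    exact ⟨Fin.castLE hk t, t.2, hx⟩

theorem ncard_le_fge_prefUnion [Finite γ] {G : Set γ → Prop} {m : ℕ} {F : Fin m → Set γ}
    (hF : ∀ i, G (F i)) {k : ℕ} (hk : k ≤ m) :
    (prefUnion F k).ncard ≤ fge G k := by
  rw [prefUnion_eq_iUnion_castLE F hk]
  exact le_fge _ (fun t => hF _)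

theorem iUnion_fin_one (F : Fin 1 → Set γ) : ⋃ i, F i = F 0 := by
  ext x
  simp only [Set.mem_iUnion]
  constructor
  · rintro ⟨i, h⟩
    fin_cases i
    exact h
  · intro h
    exact ⟨0, h⟩

theorem ncard_prefUnion_succ [Finite γ] {m : ℕ} {F : Fin m → Set γ}
    (hd : ∀ i j, i ≠ j → Disjoint (F i) (F j)) {k : ℕ} (hk : k < m) :
    (prefUnion F (k + 1)).ncard = (prefUnion F k).ncard + (F ⟨k, hk⟩).ncard := by
  have hdisj : Disjoint (prefUnion F k) (F ⟨k, hk⟩) := by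
    rw [Set.disjoint_left]
    intro x hx hx'
    simp only [prefUnion, Set.mem_iUnion] at hx
    obtain ⟨i, hik, hxi⟩ := hx
    have hne : i ≠ ⟨k, hk⟩ := by
      intro h
      rw [h] at hik
      simp at hik
    exact Set.disjoint_left.1 (hd i ⟨k, hk⟩ hne) hxi hx'
  rw [prefUnion_succ F hk, Set.ncard_union_eq hdisj (Set.toFinite _) (Set.toFinite _)]

theorem le_fge_finset [Finite γ] {G : Set γ → Prop} {ι : Type*} (s : Finset ι)
    (S : ι → Set γ) (h : ∀ t ∈ s, G (S t)) :
    (⋃ t ∈ s, S t).ncard ≤ fge G s.card := by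
  classical
  have e : Fin s.card ≃ {x // x ∈ s} :=
    (finCongr (Fintype.card_coe s)).symm.trans (Fintype.equivFin {x // x ∈ s}).symm
  have hun : (⋃ i : Fin s.card, S (e i : ι)) = ⋃ t ∈ s, S t := by
    ext x
    simp only [Set.mem_iUnion]
    constructor
    · rintro ⟨i, hx⟩
      exact ⟨(e i : ι), (e i).2, hx⟩
    · rintro ⟨t, ht, hx⟩
      exact ⟨e.symm ⟨t, ht⟩, by simpa using hx⟩
  calc (⋃ t ∈ s, S t).ncard = (⋃ i : Fin s.card, S (e i : ι)).ncard := by rw [hun]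
    _ ≤ fge G s.card := le_fge _ (fun i => h _ (e i).2)

/-- In a partition of the whole (finite) type into `p` pieces together with a set `C` of
size `p` meeting each piece at most once, every piece is nonempty. -/
theorem decomp_nonempty [Finite γ] {p : ℕ} (A : Fin p → Set γ)
    (hcover : (⋃ i, A i) = Set.univ) (C : Set γ) (hC : C.ncard = p)
    (hmeet : ∀ i, ∀ x ∈ C, ∀ y ∈ C, x ∈ A i → y ∈ A i → x = y) (i : Fin p) :
    (A i).Nonempty := by
  classical
  -- map each element of C to an index
  have hmem : ∀ x : γ, ∃ i : Fin p, x ∈ A i := by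
    intro x
    have : x ∈ ⋃ i, A i := hcover ▸ Set.mem_univ x
    simpa [Set.mem_iUnion] using this
  choose f hf using hmem
  have hinj : Function.Injective (fun x : C => f (x : γ)) := by
    rintro ⟨x, hx⟩ ⟨y, hy⟩ hxy
    simp only at hxy
    have := hmeet (f x) x hx y hy (hf x) (hxy ▸ hf y)
    exact Subtype.ext this
  have hcard : Nat.card C = Nat.card (Fin p) := by
    rw [Nat.card_coe_set_eq, hC, Nat.card_eq_fintype_card, Fintype.card_fin]
  have hbij : Function.Bijective (fun x : C => f (x : γ)) :=
    (Nat.bijective_iff_injective_and_card _).2 ⟨hinj, hcard⟩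
  obtain ⟨x, hx⟩ := hbij.2 i
  exact ⟨(x : γ), hx ▸ hf (x : γ)⟩

end prefUnion

/-! ### sum set helpers -/

section sumsets

variable {α β : Type*}

theorem disjoint_inl_inr (S : Set α) (T : Set β) :
    Disjoint (Sum.inl '' S) (Sum.inr '' T : Set (α ⊕ β)) := by
  rw [Set.disjoint_left]
  rintro _ ⟨a, _, rfl⟩ ⟨b, _, h⟩
  exact Sum.inl_ne_inr h.symm

theorem ncard_inl_union_inr [Finite α] [Finite β] (S : Set α) (T : Set β) :
    (Sum.inl '' S ∪ Sum.inr '' T : Set (α ⊕ β)).ncard = S.ncard + T.ncard := by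
  rw [Set.ncard_union_eq (disjoint_inl_inr S T) (Set.toFinite _) (Set.toFinite _),
    Set.ncard_image_of_injective _ Sum.inl_injective,
    Set.ncard_image_of_injective _ Sum.inr_injective]

theorem preimage_inl_union (S : Set α) (T : Set β) :
    Sum.inl ⁻¹' (Sum.inl '' S ∪ Sum.inr '' T : Set (α ⊕ β)) = S := by
  ext a
  simp [Set.mem_preimage]

theorem preimage_inr_union (S : Set α) (T : Set β) :
    Sum.inr ⁻¹' (Sum.inl '' S ∪ Sum.inr '' T : Set (α ⊕ β)) = T := by
  ext b
  simp [Set.mem_preimage]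

theorem ncard_sum_split [Finite α] [Finite β] (X : Set (α ⊕ β)) :
    X.ncard = (Sum.inl ⁻¹' X).ncard + (Sum.inr ⁻¹' X).ncard := by
  conv_lhs => rw [← Set.image_preimage_inl_union_image_preimage_inr X]
  exact ncard_inl_union_inr _ _

end sumsets


/-! ### Combination, easy case: good sets of the sum are pairs of good sets -/

section combineA

variable {α β : Type*} [Finite α] [Finite β]
variable {Gα : Set α → Prop} {Gβ : Set β → Prop} {Gγ : Set (α ⊕ β) → Prop}

theorem combineA_fge (hGα0 : Gα ∅) (hGβ0 : Gβ ∅)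
    (hchar : ∀ U : Set (α ⊕ β), Gγ U ↔ Gα (Sum.inl ⁻¹' U) ∧ Gβ (Sum.inr ⁻¹' U)) (k : ℕ) :
    fge Gγ k = fge Gα k + fge Gβ k := by
  have hGγ0 : Gγ ∅ := (hchar ∅).2 (by simpa using ⟨hGα0, hGβ0⟩)
  apply le_antisymm
  · obtain ⟨W, hW, hcard⟩ := fge_exists hGγ0 k
    rw [← hcard, ncard_sum_split (⋃ i, W i), Set.preimage_iUnion, Set.preimage_iUnion]
    have h1 : (⋃ i, Sum.inl ⁻¹' (W i)).ncard ≤ fge Gα k :=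
      le_fge (fun i => Sum.inl ⁻¹' (W i)) (fun i => ((hchar _).1 (hW i)).1)
    have h2 : (⋃ i, Sum.inr ⁻¹' (W i)).ncard ≤ fge Gβ k :=
      le_fge (fun i => Sum.inr ⁻¹' (W i)) (fun i => ((hchar _).1 (hW i)).2)
    omega
  · obtain ⟨Fa, hFa, hcarda⟩ := fge_exists hGα0 k
    obtain ⟨Fb, hFb, hcardb⟩ := fge_exists hGβ0 k
    have := le_fge (G := Gγ) (fun i => Sum.inl '' Fa i ∪ Sum.inr '' Fb i)
      (fun i => (hchar _).2 (by rw [preimage_inl_union, preimage_inr_union]; exact ⟨hFa i, hFb i⟩))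
    rw [← hcarda, ← hcardb]
    refine le_trans (le_of_eq ?_) this
    rw [← ncard_inl_union_inr (⋃ i, Fa i) (⋃ i, Fb i), Set.image_iUnion, Set.image_iUnion,
      ← Set.iUnion_union_distrib]

theorem combineA_decomp (hGα0 : Gα ∅) (hGβ0 : Gβ ∅)
    (hchar : ∀ U : Set (α ⊕ β), Gγ U ↔ Gα (Sum.inl ⁻¹' U) ∧ Gβ (Sum.inr ⁻¹' U))
    {p q : ℕ} {A : Fin p → Set α} {B : Fin q → Set β}
    (hAg : ∀ i, Gα (A i)) (hAd : ∀ i j, i ≠ j → Disjoint (A i) (A j))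
    (hAu : (⋃ i, A i) = Set.univ) (hAp : ∀ k ≤ p, (prefUnion A k).ncard = fge Gα k)
    (hBg : ∀ i, Gβ (B i)) (hBd : ∀ i j, i ≠ j → Disjoint (B i) (B j))
    (hBu : (⋃ i, B i) = Set.univ) (hBp : ∀ k ≤ q, (prefUnion B k).ncard = fge Gβ k) :
    ∃ F : Fin (max p q) → Set (α ⊕ β), (∀ i, Gγ (F i)) ∧
      (∀ i j, i ≠ j → Disjoint (F i) (F j)) ∧ (⋃ i, F i) = Set.univ ∧
      ∀ k ≤ max p q, (prefUnion F k).ncard = fge Gγ k := by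
  classical
  set A' : ℕ → Set α := fun n => if h : n < p then A ⟨n, h⟩ else ∅ with hA'
  set B' : ℕ → Set β := fun n => if h : n < q then B ⟨n, h⟩ else ∅ with hB'
  have hA'g : ∀ n, Gα (A' n) := by
    intro n
    rw [hA']
    dsimp only
    split
    · exact hAg _
    · exact hGα0
  have hB'g : ∀ n, Gβ (B' n) := by
    intro n
    rw [hB']
    dsimp only
    split
    · exact hBg _
    · exact hGβ0
  have hA'd : ∀ m n : ℕ, m ≠ n → Disjoint (A' m) (A' n) := by
    intro m n hmn
    rw [hA']
    dsimp only
    split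
    · split
      · exact hAd _ _ (by simp [Fin.ext_iff, hmn])
      · exact Set.disjoint_empty _
    · exact Set.empty_disjoint _
  have hB'd : ∀ m n : ℕ, m ≠ n → Disjoint (B' m) (B' n) := by
    intro m n hmn
    rw [hB']
    dsimp only
    split
    · split
      · exact hBd _ _ (by simp [Fin.ext_iff, hmn])
      · exact Set.disjoint_empty _
    · exact Set.empty_disjoint _
  -- extended prefix formulas
  have hAfull : fge Gα p = Nat.card α := by
    rw [← hAp p le_rfl, prefUnion_of_le A le_rfl, hAu, Set.ncard_univ]
  have hBfull : fge Gβ q = Nat.card β := by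
    rw [← hBp q le_rfl, prefUnion_of_le B le_rfl, hBu, Set.ncard_univ]
  have hApAll : ∀ k, (prefUnion A k).ncard = fge Gα k := by
    intro k
    rcases le_or_gt k p with h | h
    · exact hAp k h
    · rw [prefUnion_of_le A h.le, hAu, Set.ncard_univ]
      have h1 := fge_mono hGα0 (le_of_lt h)
      have h2 := fge_le_card Gα k
      omega
  have hBpAll : ∀ k, (prefUnion B k).ncard = fge Gβ k := by
    intro k
    rcases le_or_gt k q with h | h
    · exact hBp k h
    · rw [prefUnion_of_le B h.le, hBu, Set.ncard_univ]
      have h1 := fge_mono hGβ0 (le_of_lt h)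
      have h2 := fge_le_card Gβ k
      omega
  refine ⟨fun i => Sum.inl '' A' (i : ℕ) ∪ Sum.inr '' B' (i : ℕ), ?_, ?_, ?_, ?_⟩
  · intro i
    exact (hchar _).2 (by rw [preimage_inl_union, preimage_inr_union]; exact ⟨hA'g _, hB'g _⟩)
  · intro i j hij
    have hij' : (i : ℕ) ≠ (j : ℕ) := fun h => hij (Fin.ext h)
    refine Set.disjoint_union_left.2 ⟨?_, ?_⟩ <;> refine Set.disjoint_union_right.2 ⟨?_, ?_⟩
    · exact (Set.disjoint_image_iff Sum.inl_injective).2 (hA'd _ _ hij')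
    · exact disjoint_inl_inr _ _
    · exact (disjoint_inl_inr _ _).symm
    · exact (Set.disjoint_image_iff Sum.inr_injective).2 (hB'd _ _ hij')
  · rw [Set.eq_univ_iff_forall]
    intro x
    rcases x with a | b
    · have : a ∈ ⋃ i, A i := hAu ▸ Set.mem_univ a
      obtain ⟨i, hi⟩ := by simpa [Set.mem_iUnion] using this
      have hip : (i : ℕ) < max p q := lt_of_lt_of_le i.2 (le_max_left p q)
      refine Set.mem_iUnion.2 ⟨⟨(i : ℕ), hip⟩, Or.inl ?_⟩
      refine ⟨a, ?_, rfl⟩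
      rw [hA']
      dsimp only
      rw [dif_pos i.2]
      simpa using hi
    · have : b ∈ ⋃ i, B i := hBu ▸ Set.mem_univ b
      obtain ⟨i, hi⟩ := by simpa [Set.mem_iUnion] using this
      have hip : (i : ℕ) < max p q := lt_of_lt_of_le i.2 (le_max_right p q)
      refine Set.mem_iUnion.2 ⟨⟨(i : ℕ), hip⟩, Or.inr ?_⟩
      refine ⟨b, ?_, rfl⟩
      rw [hB']
      dsimp only
      rw [dif_pos i.2]
      simpa using hi
  · intro k hk
    have hPF : prefUnion (fun i : Fin (max p q) => Sum.inl '' A' (i : ℕ) ∪ Sum.inr '' B' (i : ℕ)) k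
        = Sum.inl '' prefUnion A k ∪ Sum.inr '' prefUnion B k := by
      ext x
      simp only [prefUnion, Set.mem_iUnion, Set.mem_union]
      constructor
      · rintro ⟨i, hik, (⟨a, ha, rfl⟩ | ⟨b, hb, rfl⟩)⟩
        · left
          rw [hA'] at ha
          dsimp only at ha
          by_cases h : (i : ℕ) < p
          · rw [dif_pos h] at ha
            exact ⟨a, Set.mem_iUnion.2 ⟨⟨(i : ℕ), h⟩, Set.mem_iUnion.2 ⟨hik, ha⟩⟩, rfl⟩
          · rw [dif_neg h] at ha
            exact absurd ha (Set.notMem_empty a)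
        · right
          rw [hB'] at hb
          dsimp only at hb
          by_cases h : (i : ℕ) < q
          · rw [dif_pos h] at hb
            exact ⟨b, Set.mem_iUnion.2 ⟨⟨(i : ℕ), h⟩, Set.mem_iUnion.2 ⟨hik, hb⟩⟩, rfl⟩
          · rw [dif_neg h] at hb
            exact absurd hb (Set.notMem_empty b)
      · rintro (⟨a, ha, rfl⟩ | ⟨b, hb, rfl⟩)
        · obtain ⟨i, hik, hai⟩ := by
            simpa only [prefUnion, Set.mem_iUnion] using ha
          refine ⟨⟨(i : ℕ), lt_of_lt_of_le i.2 (le_max_left p q)⟩, hik, Or.inl ⟨a, ?_, rfl⟩⟩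
          rw [hA']
          dsimp only
          rw [dif_pos i.2]
          simpa using hai
        · obtain ⟨i, hik, hbi⟩ := by
            simpa only [prefUnion, Set.mem_iUnion] using hb
          refine ⟨⟨(i : ℕ), lt_of_lt_of_le i.2 (le_max_right p q)⟩, hik, Or.inr ⟨b, ?_, rfl⟩⟩
          rw [hB']
          dsimp only
          rw [dif_pos i.2]
          simpa using hbi
    rw [hPF, ncard_inl_union_inr, hApAll, hBpAll, combineA_fge hGα0 hGβ0 hchar]

end combineA

/-! ### numeric strictness -/

theorem gpath_fst_strict (u v : ℕ → ℕ) {t1 t2 : ℕ} (h12 : t1 < t2)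
    (hstep : v (gpath u v t1).2 ≤ u (gpath u v t1).1) :
    (gpath u v t1).1 < (gpath u v t2).1 := by
  have hg : gpath u v (t1 + 1) =
      if v (gpath u v t1).2 ≤ u (gpath u v t1).1
      then ((gpath u v t1).1 + 1, (gpath u v t1).2)
      else ((gpath u v t1).1, (gpath u v t1).2 + 1) := by rw [gpath]
  have h1 : (gpath u v (t1 + 1)).1 = (gpath u v t1).1 + 1 := by
    rw [hg, if_pos hstep]
  have h2 : (gpath u v (t1 + 1)).1 ≤ (gpath u v t2).1 := gpath_fst_mono u v (by omega)
  omega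

theorem gpath_snd_strict (u v : ℕ → ℕ) {t1 t2 : ℕ} (h12 : t1 < t2)
    (hstep : ¬ v (gpath u v t1).2 ≤ u (gpath u v t1).1) :
    (gpath u v t1).2 < (gpath u v t2).2 := by
  have hg : gpath u v (t1 + 1) =
      if v (gpath u v t1).2 ≤ u (gpath u v t1).1
      then ((gpath u v t1).1 + 1, (gpath u v t1).2)
      else ((gpath u v t1).1, (gpath u v t1).2 + 1) := by rw [gpath]
  have h1 : (gpath u v (t1 + 1)).2 = (gpath u v t1).2 + 1 := by
    rw [hg, if_neg hstep]
  have h2 : (gpath u v (t1 + 1)).2 ≤ (gpath u v t2).2 := gpath_snd_mono u v (by omega)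
  omega

/-! ### properties of maximal decompositions -/

section decompProps

variable {γ : Type*} [Finite γ] {G : Set γ → Prop} {p : ℕ} {A : Fin p → Set γ}

/-- prefix counts of a maximal decomposition equal the `pre` of its size sequence -/
theorem decomp_pre (hGe : G ∅) (hAg : ∀ i, G (A i))
    (hAd : ∀ i j, i ≠ j → Disjoint (A i) (A j))
    (hAp : ∀ k ≤ p, (prefUnion A k).ncard = fge G k) :
    ∀ n ≤ p, pre (fun n => if h : n < p then (A ⟨n, h⟩).ncard else 0) n = fge G n := by
  intro n hn
  induction n with
  | zero => simp [pre, fge_zero]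
  | succ m ih =>
    have hm : m < p := by omega
    have : pre (fun n => if h : n < p then (A ⟨n, h⟩).ncard else 0) (m + 1)
        = pre (fun n => if h : n < p then (A ⟨n, h⟩).ncard else 0) m + (A ⟨m, hm⟩).ncard := by
      rw [pre, dif_pos hm]
    rw [this, ih (by omega), ← hAp (m + 1) (by omega), ncard_prefUnion_succ hAd hm,
      hAp m (by omega)]

theorem decomp_full (hAu : (⋃ i, A i) = Set.univ)
    (hAp : ∀ k ≤ p, (prefUnion A k).ncard = fge G k) :
    fge G p = Nat.card γ := by
  rw [← hAp p le_rfl, prefUnion_of_le A le_rfl, hAu, Set.ncard_univ]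

theorem decomp_fge_eq_pre (hGe : G ∅) (hAg : ∀ i, G (A i))
    (hAd : ∀ i j, i ≠ j → Disjoint (A i) (A j)) (hAu : (⋃ i, A i) = Set.univ)
    (hAp : ∀ k ≤ p, (prefUnion A k).ncard = fge G k) :
    ∀ n, fge G n = pre (fun n => if h : n < p then (A ⟨n, h⟩).ncard else 0) n := by
  intro n
  rcases le_or_gt n p with h | h
  · exact (decomp_pre hGe hAg hAd hAp n h).symm
  · have h0 : ∀ i, p ≤ i → (fun n => if h : n < p then (A ⟨n, h⟩).ncard else 0) i = 0 := by
      intro i hi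
      exact dif_neg (by omega)
    rw [pre_stab _ h0 n h.le, decomp_pre hGe hAg hAd hAp p le_rfl]
    have h1 := fge_mono hGe h.le
    have h2 := fge_le_card G n
    have h3 := decomp_full hAu hAp
    omega

/-- sortedness: in a maximal decomposition sizes are non-increasing -/
theorem decomp_sorted (hGe : G ∅) (hAg : ∀ i, G (A i))
    (hAd : ∀ i j, i ≠ j → Disjoint (A i) (A j))
    (hAp : ∀ k ≤ p, (prefUnion A k).ncard = fge G k)
    {i j : ℕ} (hij : i ≤ j) (hj : j < p) :
    (A ⟨j, hj⟩).ncard ≤ (A ⟨i, by omega⟩).ncard := by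
  classical
  have hi : i < p := by omega
  set W : Fin (i + 1) → Set γ :=
    fun t => if h : (t : ℕ) < i then A ⟨(t : ℕ), by omega⟩ else A ⟨j, hj⟩ with hW
  have hWg : ∀ t, G (W t) := by
    intro t
    rw [hW]
    dsimp only
    split
    · exact hAg _
    · exact hAg _
  have hWu : (⋃ t, W t) = prefUnion A i ∪ A ⟨j, hj⟩ := by
    ext x
    simp only [Set.mem_iUnion, Set.mem_union, prefUnion]
    constructor
    · rintro ⟨t, hx⟩
      rw [hW] at hx
      dsimp only at hx
      by_cases h : (t : ℕ) < i
      · rw [dif_pos h] at hx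
        exact Or.inl ⟨⟨(t : ℕ), by omega⟩, h, hx⟩
      · rw [dif_neg h] at hx
        exact Or.inr hx
    · rintro (⟨s, hsi, hx⟩ | hx)
      · refine ⟨⟨(s : ℕ), by omega⟩, ?_⟩
        rw [hW]
        dsimp only
        rw [dif_pos hsi]
        have : (⟨(s : ℕ), by omega⟩ : Fin p) = s := Fin.ext rfl
        rwa [this]
      · refine ⟨⟨i, by omega⟩, ?_⟩
        rw [hW]
        dsimp only
        rw [dif_neg (by simp)]
        exact hx
  have hdisj : Disjoint (prefUnion A i) (A ⟨j, hj⟩) := by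
    rw [Set.disjoint_left]
    intro x hx hx'
    simp only [prefUnion, Set.mem_iUnion] at hx
    obtain ⟨s, hsi, hxs⟩ := hx
    have hne : s ≠ ⟨j, hj⟩ := by
      intro h
      rw [h] at hsi
      simp at hsi
      omega
    exact Set.disjoint_left.1 (hAd s ⟨j, hj⟩ hne) hxs hx'
  have hWcard : (⋃ t, W t).ncard = fge G i + (A ⟨j, hj⟩).ncard := by
    rw [hWu, Set.ncard_union_eq hdisj (Set.toFinite _) (Set.toFinite _), hAp i (by omega)]
  have h1 : fge G i + (A ⟨j, hj⟩).ncard ≤ fge G (i + 1) := hWcard ▸ le_fge W hWg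
  have h2 : fge G (i + 1) = fge G i + (A ⟨i, hi⟩).ncard := by
    rw [← hAp (i + 1) (by omega), ncard_prefUnion_succ hAd hi, hAp i (by omega)]
  omega

end decompProps

/-! ### Combination, merge case: good sets of the sum are one-sided -/

section combineB

variable {α β : Type*} [Finite α] [Finite β]
variable {Gα : Set α → Prop} {Gβ : Set β → Prop} {Gγ : Set (α ⊕ β) → Prop}

theorem preimage_inl_image_inl (S : Set α) :
    (Sum.inl ⁻¹' (Sum.inl '' S : Set (α ⊕ β))) = S :=
  Set.preimage_image_eq S Sum.inl_injective

theorem preimage_inr_image_inr (T : Set β) :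
    (Sum.inr ⁻¹' (Sum.inr '' T : Set (α ⊕ β))) = T :=
  Set.preimage_image_eq T Sum.inr_injective

theorem preimage_inl_image_inr (T : Set β) :
    (Sum.inl ⁻¹' (Sum.inr '' T : Set (α ⊕ β))) = ∅ := by
  ext a
  simp

theorem preimage_inr_image_inl (S : Set α) :
    (Sum.inr ⁻¹' (Sum.inl '' S : Set (α ⊕ β))) = ∅ := by
  ext b
  simp

theorem combineB_decomp (hGα0 : Gα ∅) (hGβ0 : Gβ ∅)
    (hchar : ∀ U : Set (α ⊕ β), Gγ U ↔
      (∃ S, Gα S ∧ U = Sum.inl '' S) ∨ (∃ T, Gβ T ∧ U = Sum.inr '' T))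
    {p q : ℕ} {A : Fin p → Set α} {B : Fin q → Set β}
    (hAg : ∀ i, Gα (A i)) (hAd : ∀ i j, i ≠ j → Disjoint (A i) (A j))
    (hAu : (⋃ i, A i) = Set.univ) (hAp : ∀ k ≤ p, (prefUnion A k).ncard = fge Gα k)
    (hA1 : ∀ i, (A i).Nonempty)
    (hBg : ∀ i, Gβ (B i)) (hBd : ∀ i j, i ≠ j → Disjoint (B i) (B j))
    (hBu : (⋃ i, B i) = Set.univ) (hBp : ∀ k ≤ q, (prefUnion B k).ncard = fge Gβ k)
    (hB1 : ∀ i, (B i).Nonempty) :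
    ∃ F : Fin (p + q) → Set (α ⊕ β), (∀ i, Gγ (F i)) ∧
      (∀ i j, i ≠ j → Disjoint (F i) (F j)) ∧ (⋃ i, F i) = Set.univ ∧
      ∀ k ≤ p + q, (prefUnion F k).ncard = fge Gγ k := by
  classical
  have hGγ0 : Gγ ∅ := (hchar ∅).2 (Or.inl ⟨∅, hGα0, by simp⟩)
  set u : ℕ → ℕ := fun n => if h : n < p then (A ⟨n, h⟩).ncard else 0 with hudef
  set v : ℕ → ℕ := fun n => if h : n < q then (B ⟨n, h⟩).ncard else 0 with hvdef
  have hu0 : ∀ n, p ≤ n → u n = 0 := fun n hn => dif_neg (by omega)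
  have hv0 : ∀ n, q ≤ n → v n = 0 := fun n hn => dif_neg (by omega)
  have hu1 : ∀ n, n < p → 1 ≤ u n := by
    intro n hn
    have : u n = (A ⟨n, hn⟩).ncard := dif_pos hn
    rw [this]
    exact (Set.ncard_pos (Set.toFinite _)).2 (hA1 _)
  have hv1 : ∀ n, n < q → 1 ≤ v n := by
    intro n hn
    have : v n = (B ⟨n, hn⟩).ncard := dif_pos hn
    rw [this]
    exact (Set.ncard_pos (Set.toFinite _)).2 (hB1 _)
  have huanti : ∀ ⦃i j : ℕ⦄, i ≤ j → u j ≤ u i := by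
    intro i j hij
    rcases Nat.lt_or_ge j p with hj | hj
    · have h1 : u j = (A ⟨j, hj⟩).ncard := dif_pos hj
      have h2 : u i = (A ⟨i, by omega⟩).ncard := dif_pos (by omega)
      rw [h1, h2]
      exact decomp_sorted hGα0 hAg hAd hAp hij hj
    · rw [hu0 j hj]
      exact Nat.zero_le _
  have hvanti : ∀ ⦃i j : ℕ⦄, i ≤ j → v j ≤ v i := by
    intro i j hij
    rcases Nat.lt_or_ge j q with hj | hj
    · have h1 : v j = (B ⟨j, hj⟩).ncard := dif_pos hj
      have h2 : v i = (B ⟨i, by omega⟩).ncard := dif_pos (by omega)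
      rw [h1, h2]
      exact decomp_sorted hGβ0 hBg hBd hBp hij hj
    · rw [hv0 j hj]
      exact Nat.zero_le _
  have hfgeA : ∀ n, fge Gα n = pre u n := decomp_fge_eq_pre hGα0 hAg hAd hAu hAp
  have hfgeB : ∀ n, fge Gβ n = pre v n := decomp_fge_eq_pre hGβ0 hBg hBd hBu hBp
  have hbound := gpath_bound u v p q hu0 hv1 hv0
  have hsteplt := gpath_step_lt u v p q hu0 hv1 hv0
  -- the merged family
  set A' : ℕ → Set α := fun n => if h : n < p then A ⟨n, h⟩ else ∅ with hA'
  set B' : ℕ → Set β := fun n => if h : n < q then B ⟨n, h⟩ else ∅ with hB'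
  set F : Fin (p + q) → Set (α ⊕ β) := fun t =>
    if v (gpath u v (t : ℕ)).2 ≤ u (gpath u v (t : ℕ)).1
    then Sum.inl '' A' (gpath u v (t : ℕ)).1
    else Sum.inr '' B' (gpath u v (t : ℕ)).2 with hF
  have hFdef : ∀ t : Fin (p + q),
      (∀ (hle : v (gpath u v (t : ℕ)).2 ≤ u (gpath u v (t : ℕ)).1),
        F t = Sum.inl '' A ⟨(gpath u v (t : ℕ)).1, (hsteplt (t : ℕ) t.2).1 hle⟩) ∧
      (∀ (hle : ¬ v (gpath u v (t : ℕ)).2 ≤ u (gpath u v (t : ℕ)).1),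
        F t = Sum.inr '' B ⟨(gpath u v (t : ℕ)).2, (hsteplt (t : ℕ) t.2).2 hle⟩) := by
    intro t
    constructor
    · intro hs
      rw [hF]
      dsimp only
      rw [if_pos hs, hA']
      dsimp only
      rw [dif_pos ((hsteplt (t : ℕ) t.2).1 hs)]
    · intro hs
      rw [hF]
      dsimp only
      rw [if_neg hs, hB']
      dsimp only
      rw [dif_pos ((hsteplt (t : ℕ) t.2).2 hs)]
  refine ⟨F, ?_, ?_, ?_, ?_⟩
  · -- goodness
    intro t
    by_cases hs : v (gpath u v (t : ℕ)).2 ≤ u (gpath u v (t : ℕ)).1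
    · rw [(hFdef t).1 hs]
      exact (hchar _).2 (Or.inl ⟨_, hAg _, rfl⟩)
    · rw [(hFdef t).2 hs]
      exact (hchar _).2 (Or.inr ⟨_, hBg _, rfl⟩)
  · -- disjointness
    have key : ∀ t1 t2 : Fin (p + q), t1 < t2 → Disjoint (F t1) (F t2) := by
      intro t1 t2 h12
      by_cases hs1 : v (gpath u v (t1 : ℕ)).2 ≤ u (gpath u v (t1 : ℕ)).1 <;>
        by_cases hs2 : v (gpath u v (t2 : ℕ)).2 ≤ u (gpath u v (t2 : ℕ)).1
      · rw [(hFdef t1).1 hs1, (hFdef t2).1 hs2]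
        refine (Set.disjoint_image_iff Sum.inl_injective).2 (hAd _ _ ?_)
        have := gpath_fst_strict u v (show (t1 : ℕ) < (t2 : ℕ) from h12) hs1
        exact Fin.ne_of_val_ne (by simpa using this.ne)
      · rw [(hFdef t1).1 hs1, (hFdef t2).2 hs2]
        exact disjoint_inl_inr _ _
      · rw [(hFdef t1).2 hs1, (hFdef t2).1 hs2]
        exact (disjoint_inl_inr _ _).symm
      · rw [(hFdef t1).2 hs1, (hFdef t2).2 hs2]
        refine (Set.disjoint_image_iff Sum.inr_injective).2 (hBd _ _ ?_)
        have := gpath_snd_strict u v (show (t1 : ℕ) < (t2 : ℕ) from h12) hs1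
        exact Fin.ne_of_val_ne (by simpa using this.ne)
    intro i j hij
    rcases lt_or_gt_of_ne hij with h | h
    · exact key i j h
    · exact (key j i h).symm
  · -- covering
    have hfull := gpath_full u v p q hu0 hv1 hv0
    rw [Set.eq_univ_iff_forall]
    intro x
    rcases x with a | b
    · have : a ∈ ⋃ i, A i := hAu ▸ Set.mem_univ a
      obtain ⟨i, hi⟩ := Set.mem_iUnion.1 this
      obtain ⟨k, hk, hkfst, hkstep⟩ := gpath_fst_hit u v (p + q) (i : ℕ) (by omega)
      refine Set.mem_iUnion.2 ⟨⟨k, hk⟩, ?_⟩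
      rw [(hFdef ⟨k, hk⟩).1 hkstep]
      refine ⟨a, ?_, rfl⟩
      convert hi using 2
      exact Fin.ext (by simpa using hkfst)
    · have : b ∈ ⋃ i, B i := hBu ▸ Set.mem_univ b
      obtain ⟨i, hi⟩ := Set.mem_iUnion.1 this
      obtain ⟨k, hk, hkfst, hkstep⟩ := gpath_snd_hit u v (p + q) (i : ℕ) (by omega)
      refine Set.mem_iUnion.2 ⟨⟨k, hk⟩, ?_⟩
      rw [(hFdef ⟨k, hk⟩).2 hkstep]
      refine ⟨b, ?_, rfl⟩
      convert hi using 2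
      exact Fin.ext (by simpa using hkfst)
  · -- prefix counts
    have hPF : ∀ k ≤ p + q, prefUnion F k =
        Sum.inl '' prefUnion A (gpath u v k).1 ∪ Sum.inr '' prefUnion B (gpath u v k).2 := by
      intro k
      induction k with
      | zero =>
        intro _
        rw [prefUnion_zero]
        have h0 : gpath u v 0 = (0, 0) := rfl
        rw [h0]
        rw [prefUnion_zero, prefUnion_zero]
        simp
      | succ m ih =>
        intro hm
        have hm' : m < p + q := by omega
        have hg : gpath u v (m + 1) =
            if v (gpath u v m).2 ≤ u (gpath u v m).1
            then ((gpath u v m).1 + 1, (gpath u v m).2)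
            else ((gpath u v m).1, (gpath u v m).2 + 1) := by rw [gpath]
        rw [prefUnion_succ F hm', ih (by omega)]
        by_cases hs : v (gpath u v m).2 ≤ u (gpath u v m).1
        · have hlt : (gpath u v m).1 < p := (hsteplt m hm').1 hs
          rw [(hFdef ⟨m, hm'⟩).1 hs, hg, if_pos hs]
          simp only
          rw [prefUnion_succ A hlt, Set.image_union, Set.union_right_comm]
        · have hlt : (gpath u v m).2 < q := (hsteplt m hm').2 hs
          rw [(hFdef ⟨m, hm'⟩).2 hs, hg, if_neg hs]
          simp only
          rw [prefUnion_succ B hlt, Set.image_union, Set.union_assoc]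
    intro k hk
    have hbk := hbound k hk
    have hlhs : (prefUnion F k).ncard = pre u (gpath u v k).1 + pre v (gpath u v k).2 := by
      rw [hPF k hk, ncard_inl_union_inr, hAp _ hbk.1, hBp _ hbk.2,
        hfgeA, hfgeB]
    rw [hlhs]
    apply le_antisymm
    · -- gpath value ≤ fge Gγ k
      rw [← hlhs, prefUnion_eq_iUnion_castLE F hk]
      exact le_fge _ (fun t => by
        by_cases hs : v (gpath u v ((Fin.castLE hk t : Fin (p + q)) : ℕ)).2
            ≤ u (gpath u v ((Fin.castLE hk t : Fin (p + q)) : ℕ)).1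
        · rw [(hFdef _).1 hs]
          exact (hchar _).2 (Or.inl ⟨_, hAg _, rfl⟩)
        · rw [(hFdef _).2 hs]
          exact (hchar _).2 (Or.inr ⟨_, hBg _, rfl⟩))
    · -- fge Gγ k ≤ gpath value
      obtain ⟨W, hWg, hWc⟩ := fge_exists hGγ0 k
      rw [← hWc]
      set s : Finset (Fin k) :=
        Finset.univ.filter (fun t => ∃ S, Gα S ∧ W t = Sum.inl '' S) with hs
      have hmems : ∀ t : Fin k, t ∈ s ↔ ∃ S, Gα S ∧ W t = Sum.inl '' S := by
        intro t
        rw [hs]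
        simp
      have hsl : ∀ t ∈ s, Gα (Sum.inl ⁻¹' W t) := by
        intro t ht
        obtain ⟨S, hS, hWt⟩ := (hmems t).1 ht
        rw [hWt, preimage_inl_image_inl]
        exact hS
      have hsl0 : ∀ t ∈ s, Sum.inr ⁻¹' W t = ∅ := by
        intro t ht
        obtain ⟨S, hS, hWt⟩ := (hmems t).1 ht
        rw [hWt, preimage_inr_image_inl]
      have hsr : ∀ t ∉ s, Gβ (Sum.inr ⁻¹' W t) ∧ Sum.inl ⁻¹' W t = ∅ := by
        intro t ht
        rcases (hchar _).1 (hWg t) with h | ⟨T, hT, hWt⟩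
        · exact absurd ((hmems t).2 h) ht
        · rw [hWt, preimage_inr_image_inr, preimage_inl_image_inr]
          exact ⟨hT, rfl⟩
      have hX : (⋃ i, W i).ncard
          = (⋃ t ∈ s, Sum.inl ⁻¹' W t).ncard + (⋃ t ∈ sᶜ, Sum.inr ⁻¹' W t).ncard := by
        rw [ncard_sum_split (⋃ i, W i), Set.preimage_iUnion, Set.preimage_iUnion]
        congr 2
        · ext a
          simp only [Set.mem_iUnion]
          constructor
          · rintro ⟨t, ht⟩
            refine ⟨t, ?_, ht⟩
            by_contra hts
            rw [(hsr t hts).2] at ht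
            exact ht
          · rintro ⟨t, _, ht⟩
            exact ⟨t, ht⟩
        · ext b
          simp only [Set.mem_iUnion, Finset.mem_compl]
          constructor
          · rintro ⟨t, ht⟩
            refine ⟨t, ?_, ht⟩
            intro hts
            rw [hsl0 t hts] at ht
            exact ht
          · rintro ⟨t, _, ht⟩
            exact ⟨t, ht⟩
      rw [hX]
      have h1 : (⋃ t ∈ s, Sum.inl ⁻¹' W t).ncard ≤ fge Gα s.card :=
        le_fge_finset s _ hsl
      have h2 : (⋃ t ∈ sᶜ, Sum.inr ⁻¹' W t).ncard ≤ fge Gβ sᶜ.card :=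
        le_fge_finset sᶜ _ (fun t ht => (hsr t (Finset.mem_compl.1 ht)).1)
      have hcards : s.card + sᶜ.card = k := by
        have := Finset.card_compl s
        have h3 := Finset.card_le_univ s
        simp only [Fintype.card_fin] at this h3
        omega
      have hopt := gpath_opt u v huanti hvanti k s.card sᶜ.card hcards
      rw [hfgeA, hfgeB] at *
      omega
/-- the `fge` of the composite in the one-sided case, in optimum form -/
theorem combineB_fge_one (hGα0 : Gα ∅) (hGβ0 : Gβ ∅)
    (hchar : ∀ U : Set (α ⊕ β), Gγ U ↔
      (∃ S, Gα S ∧ U = Sum.inl '' S) ∨ (∃ T, Gβ T ∧ U = Sum.inr '' T)) :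
    fge Gγ 1 = max (fge Gα 1) (fge Gβ 1) := by
  have hGγ0 : Gγ ∅ := (hchar ∅).2 (Or.inl ⟨∅, hGα0, by simp⟩)
  apply le_antisymm
  · obtain ⟨W, hWg, hWc⟩ := fge_exists hGγ0 1
    rw [← hWc, iUnion_fin_one]
    rcases (hchar _).1 (hWg 0) with ⟨S, hS, hWt⟩ | ⟨T, hT, hWt⟩
    · refine le_trans ?_ (le_max_left _ _)
      rw [hWt, Set.ncard_image_of_injective _ Sum.inl_injective]
      have := le_fge (G := Gα) (fun _ : Fin 1 => S) (fun _ => hS)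
      rwa [iUnion_fin_one] at this
    · refine le_trans ?_ (le_max_right _ _)
      rw [hWt, Set.ncard_image_of_injective _ Sum.inr_injective]
      have := le_fge (G := Gβ) (fun _ : Fin 1 => T) (fun _ => hT)
      rwa [iUnion_fin_one] at this
  · rw [max_le_iff]
    constructor
    · obtain ⟨W, hWg, hWc⟩ := fge_exists hGα0 1
      rw [← hWc, iUnion_fin_one]
      have := le_fge (G := Gγ) (fun _ : Fin 1 => Sum.inl '' W 0)
        (fun _ => (hchar _).2 (Or.inl ⟨_, hWg 0, rfl⟩))
      rw [iUnion_fin_one] at this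
      rwa [Set.ncard_image_of_injective _ Sum.inl_injective] at this
    · obtain ⟨W, hWg, hWc⟩ := fge_exists hGβ0 1
      rw [← hWc, iUnion_fin_one]
      have := le_fge (G := Gγ) (fun _ : Fin 1 => Sum.inr '' W 0)
        (fun _ => (hchar _).2 (Or.inr ⟨_, hWg 0, rfl⟩))
      rw [iUnion_fin_one] at this
      rwa [Set.ncard_image_of_injective _ Sum.inr_injective] at this

end combineB

/-! ### bridge to heightP/widthP/dk/ck and packaging -/

section bridge

theorem heightP_eq_fge (γ : Type*) [PartialOrder γ] :
    heightP γ = fge (IsChain (· ≤ ·) : Set γ → Prop) 1 := (fge_one _).symm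

theorem widthP_eq_fge (γ : Type*) [PartialOrder γ] :
    widthP γ = fge (IsAntichain (· ≤ ·) : Set γ → Prop) 1 := (fge_one _).symm

theorem dk_eq_fge (γ : Type*) [PartialOrder γ] (k : ℕ) :
    dk γ k = fge (IsAntichain (· ≤ ·) : Set γ → Prop) k := rfl

theorem ck_eq_fge (γ : Type*) [PartialOrder γ] (k : ℕ) :
    ck γ k = fge (IsChain (· ≤ ·) : Set γ → Prop) k := rfl

theorem dDecomposable_of {γ : Type*} [PartialOrder γ] {m : ℕ} (hm : m = heightP γ)
    (F : Fin m → Set γ) (hg : ∀ i, IsAntichain (· ≤ ·) (F i))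
    (hd : ∀ i j, i ≠ j → Disjoint (F i) (F j)) (hu : (⋃ i, F i) = Set.univ)
    (hp : ∀ k ≤ m, (prefUnion F k).ncard = fge (IsAntichain (· ≤ ·) : Set γ → Prop) k) :
    DDecomposable γ := by
  subst hm
  exact ⟨F, hg, hd, hu, fun k hk => hp k hk⟩

theorem cDecomposable_of {γ : Type*} [PartialOrder γ] {m : ℕ} (hm : m = widthP γ)
    (F : Fin m → Set γ) (hg : ∀ i, IsChain (· ≤ ·) (F i))
    (hd : ∀ i j, i ≠ j → Disjoint (F i) (F j)) (hu : (⋃ i, F i) = Set.univ)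
    (hp : ∀ k ≤ m, (prefUnion F k).ncard = fge (IsChain (· ≤ ·) : Set γ → Prop) k) :
    CDecomposable γ := by
  subst hm
  exact ⟨F, hg, hd, hu, fun k hk => hp k hk⟩

theorem dDecomp_unpack {γ : Type*} [PartialOrder γ] (h : DDecomposable γ) :
    ∃ A : Fin (heightP γ) → Set γ,
      (∀ i, IsAntichain (· ≤ ·) (A i)) ∧ (∀ i j, i ≠ j → Disjoint (A i) (A j)) ∧
      (⋃ i, A i) = Set.univ ∧
      ∀ k ≤ heightP γ, (prefUnion A k).ncard = fge (IsAntichain (· ≤ ·) : Set γ → Prop) k := by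
  obtain ⟨A, h1, h2, h3, h4⟩ := h
  exact ⟨A, h1, h2, h3, fun k hk => h4 k hk⟩

theorem cDecomp_unpack {γ : Type*} [PartialOrder γ] (h : CDecomposable γ) :
    ∃ C : Fin (widthP γ) → Set γ,
      (∀ i, IsChain (· ≤ ·) (C i)) ∧ (∀ i j, i ≠ j → Disjoint (C i) (C j)) ∧
      (⋃ i, C i) = Set.univ ∧
      ∀ k ≤ widthP γ, (prefUnion C k).ncard = fge (IsChain (· ≤ ·) : Set γ → Prop) k := by
  obtain ⟨C, h1, h2, h3, h4⟩ := h
  exact ⟨C, h1, h2, h3, fun k hk => h4 k hk⟩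

theorem dDecomp_nonempty {γ : Type*} [PartialOrder γ] [Finite γ]
    {A : Fin (heightP γ) → Set γ} (hAg : ∀ i, IsAntichain (· ≤ ·) (A i))
    (hAu : (⋃ i, A i) = Set.univ) (i : Fin (heightP γ)) : (A i).Nonempty := by
  obtain ⟨W, hWg, hWc⟩ := fge_exists (G := (IsChain (· ≤ ·) : Set γ → Prop)) IsChain.empty 1
  refine decomp_nonempty A hAu (⋃ j, W j) ?_ ?_ i
  · rw [hWc, ← heightP_eq_fge]
  · intro j x hx y hy hxA hyA
    by_contra hne
    rw [iUnion_fin_one] at hx hy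
    rcases hWg 0 hx hy hne with h | h
    · exact hAg j hxA hyA hne h
    · exact hAg j hyA hxA (Ne.symm hne) h

theorem cDecomp_nonempty {γ : Type*} [PartialOrder γ] [Finite γ]
    {C : Fin (widthP γ) → Set γ} (hCg : ∀ i, IsChain (· ≤ ·) (C i))
    (hCu : (⋃ i, C i) = Set.univ) (i : Fin (widthP γ)) : (C i).Nonempty := by
  obtain ⟨W, hWg, hWc⟩ := fge_exists
    (G := (IsAntichain (· ≤ ·) : Set γ → Prop)) (Set.subsingleton_empty.isAntichain _) 1
  refine decomp_nonempty C hCu (⋃ j, W j) ?_ ?_ i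
  · rw [hWc, ← widthP_eq_fge]
  · intro j x hx y hy hxC hyC
    by_contra hne
    rw [iUnion_fin_one] at hx hy
    rcases hCg j hxC hyC hne with h | h
    · exact hWg 0 hx hy hne h
    · exact hWg 0 hy hx (Ne.symm hne) h

variable {α β : Type*} [PartialOrder α] [PartialOrder β]

theorem fge_lex_chain (k : ℕ) :
    fge (IsChain lexLE : Set (α ⊕ β) → Prop) k
      = fge (IsChain (· ≤ ·) : Set (α ⊕ₗ β) → Prop) k := by
  rw [← fge_comp_equiv (toLex : α ⊕ β ≃ α ⊕ₗ β) (IsChain (· ≤ ·)) k]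
  congr 1
  funext S
  exact propext isChain_toLex_image.symm

theorem fge_lex_antichain (k : ℕ) :
    fge (IsAntichain lexLE : Set (α ⊕ β) → Prop) k
      = fge (IsAntichain (· ≤ ·) : Set (α ⊕ₗ β) → Prop) k := by
  rw [← fge_comp_equiv (toLex : α ⊕ β ≃ α ⊕ₗ β) (IsAntichain (· ≤ ·)) k]
  congr 1
  funext S
  exact propext isAntichain_toLex_image.symm

theorem prefUnion_image {γ δ : Type*} (e : γ → δ) {m : ℕ} (F : Fin m → Set γ) (k : ℕ) :
    prefUnion (fun i => e '' F i) k = e '' prefUnion F k := by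
  ext x
  simp only [prefUnion, Set.mem_iUnion, Set.mem_image]
  constructor
  · rintro ⟨i, hik, a, ha, rfl⟩
    exact ⟨a, ⟨i, hik, ha⟩, rfl⟩
  · rintro ⟨a, ⟨i, hik, ha⟩, rfl⟩
    exact ⟨i, hik, a, ha, rfl⟩

end bridge

end SPaux

open SPaux

/-- If finite posets `P`, `P'` are both d-decomposable, then so are their
series composition `P * P'` (the lexicographic sum `α ⊕ₗ β`) and their
parallel composition `P + P'` (the disjoint sum `α ⊕ β`); likewise for
c-decomposability. -/
theorem dDecomposable_cDecomposable_series_parallel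
    (α β : Type) [Fintype α] [PartialOrder α] [Fintype β] [PartialOrder β] :
    (DDecomposable α → DDecomposable β →
      DDecomposable (α ⊕ₗ β) ∧ DDecomposable (α ⊕ β)) ∧
    (CDecomposable α → CDecomposable β →
      CDecomposable (α ⊕ₗ β) ∧ CDecomposable (α ⊕ β)) := by
  constructor
  · intro hα hβ
    obtain ⟨A, hAg, hAd, hAu, hAp⟩ := dDecomp_unpack hα
    obtain ⟨B, hBg, hBd, hBu, hBp⟩ := dDecomp_unpack hβ
    have hA1 := dDecomp_nonempty hAg hAu
    have hB1 := dDecomp_nonempty hBg hBu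
    constructor
    · obtain ⟨F, hFg, hFd, hFu, hFp⟩ :=
        combineB_decomp (Gγ := (IsAntichain lexLE : Set (α ⊕ β) → Prop))
          (Set.subsingleton_empty.isAntichain _) (Set.subsingleton_empty.isAntichain _)
          (fun U => isAntichain_lexLE_iff)
          hAg hAd hAu hAp hA1 hBg hBd hBu hBp hB1
      have hm : heightP α + heightP β = heightP (α ⊕ₗ β) := by
        rw [heightP_eq_fge (α ⊕ₗ β), ← fge_lex_chain,
          combineA_fge IsChain.empty IsChain.empty (fun U => isChain_lexLE_iff) 1,
          heightP_eq_fge α, heightP_eq_fge β]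
      refine dDecomposable_of hm (fun i => toLex '' F i) ?_ ?_ ?_ ?_
      · intro i
        exact isAntichain_toLex_image.2 (hFg i)
      · intro i j hij
        exact (Set.disjoint_image_iff toLex.injective).2 (hFd i j hij)
      · rw [← Set.image_iUnion, hFu, Set.image_univ, Equiv.range_eq_univ]
      · intro k hk
        rw [prefUnion_image, Set.ncard_image_of_injective _ toLex.injective,
          hFp k hk, fge_lex_antichain]
    · obtain ⟨F, hFg, hFd, hFu, hFp⟩ :=
        combineA_decomp (Gγ := (IsAntichain (· ≤ ·) : Set (α ⊕ β) → Prop))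
          (Set.subsingleton_empty.isAntichain _) (Set.subsingleton_empty.isAntichain _)
          (fun U => isAntichain_sum_iff)
          hAg hAd hAu hAp hBg hBd hBu hBp
      have hm : max (heightP α) (heightP β) = heightP (α ⊕ β) := by
        rw [heightP_eq_fge (α ⊕ β),
          combineB_fge_one IsChain.empty IsChain.empty (fun U => isChain_sum_iff),
          heightP_eq_fge α, heightP_eq_fge β]
      exact dDecomposable_of hm F hFg hFd hFu hFp
  · intro hα hβ
    obtain ⟨A, hAg, hAd, hAu, hAp⟩ := cDecomp_unpack hα
    obtain ⟨B, hBg, hBd, hBu, hBp⟩ := cDecomp_unpack hβ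
    have hA1 := cDecomp_nonempty hAg hAu
    have hB1 := cDecomp_nonempty hBg hBu
    constructor
    · obtain ⟨F, hFg, hFd, hFu, hFp⟩ :=
        combineA_decomp (Gγ := (IsChain lexLE : Set (α ⊕ β) → Prop))
          IsChain.empty IsChain.empty (fun U => isChain_lexLE_iff)
          hAg hAd hAu hAp hBg hBd hBu hBp
      have hm : max (widthP α) (widthP β) = widthP (α ⊕ₗ β) := by
        rw [widthP_eq_fge (α ⊕ₗ β), ← fge_lex_antichain,
          combineB_fge_one (Set.subsingleton_empty.isAntichain _)
            (Set.subsingleton_empty.isAntichain _) (fun U => isAntichain_lexLE_iff),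
          widthP_eq_fge α, widthP_eq_fge β]
      refine cDecomposable_of hm (fun i => toLex '' F i) ?_ ?_ ?_ ?_
      · intro i
        exact isChain_toLex_image.2 (hFg i)
      · intro i j hij
        exact (Set.disjoint_image_iff toLex.injective).2 (hFd i j hij)
      · rw [← Set.image_iUnion, hFu, Set.image_univ, Equiv.range_eq_univ]
      · intro k hk
        rw [prefUnion_image, Set.ncard_image_of_injective _ toLex.injective,
          hFp k hk, fge_lex_chain]
    · obtain ⟨F, hFg, hFd, hFu, hFp⟩ :=
        combineB_decomp (Gγ := (IsChain (· ≤ ·) : Set (α ⊕ β) → Prop))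
          IsChain.empty IsChain.empty (fun U => isChain_sum_iff)
          hAg hAd hAu hAp hA1 hBg hBd hBu hBp hB1
      have hm : widthP α + widthP β = widthP (α ⊕ β) := by
        rw [widthP_eq_fge (α ⊕ β),
          combineA_fge (Set.subsingleton_empty.isAntichain _)
            (Set.subsingleton_empty.isAntichain _) (fun U => isAntichain_sum_iff) 1,
          widthP_eq_fge α, widthP_eq_fge β]
      exact cDecomposable_of hm F hFg hFd hFu hFp
end

section
/- If P is a finite weak order and Q is an arbitrary finite poset, then the maximum size of a semiantichain in P×Q equals ∑_{i=1}^{k} μ_i^P·|B_i| for some family B_1, B_2, …, B_k of pairwise disjoint antichains in Q. -/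
/-- A weak order: there is a level function `f` with `a < b` iff
`f a < f b`. -/
def IsWeakOrder (α : Type*) [PartialOrder α] : Prop :=
  ∃ f : α → ℕ, ∀ a b : α, a < b ↔ f a < f b


open Finset

section Aux
variable {α : Type} [Fintype α] [PartialOrder α]

/-- fiber of the level function -/
noncomputable def fibF (f : α → ℕ) (v : ℕ) : Finset α := Finset.univ.filter (fun a => f a = v)

noncomputable def valsF (f : α → ℕ) : Finset ℕ := Finset.image f Finset.univ

noncomputable def nhF (f : α → ℕ) : ℕ := (valsF f).card

noncomputable def e0F (f : α → ℕ) : Fin (nhF f) ≃o {x // x ∈ valsF f} :=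
  (valsF f).orderIsoOfFin rfl

noncomputable def s0F (f : α → ℕ) : Fin (nhF f) → ℕ := fun m => (fibF f (e0F f m)).card

noncomputable def EF (f : α → ℕ) : Fin (nhF f) → ℕ :=
  fun i => (e0F f (Tuple.sort (s0F f) i.rev) : ℕ)

noncomputable def muF (f : α → ℕ) (i : ℕ) : ℕ :=
  if h' : i < nhF f then (fibF f (EF f ⟨i, h'⟩)).card else 0

lemma EF_inj (f : α → ℕ) : Function.Injective (EF f) := by
  intro i j h
  have := Subtype.coe_injective h
  have := (e0F f).injective this
  have := (Tuple.sort (s0F f)).injective this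
  exact Fin.rev_injective this

lemma EF_mem (f : α → ℕ) (i : Fin (nhF f)) : EF f i ∈ valsF f :=
  (e0F f (Tuple.sort (s0F f) i.rev)).2

lemma muF_fin (f : α → ℕ) (i : Fin (nhF f)) : muF f (i : ℕ) = (fibF f (EF f i)).card := by
  simp [muF, i.isLt]

lemma card_fib_EF (f : α → ℕ) (i : Fin (nhF f)) :
    (fibF f (EF f i)).card = s0F f (Tuple.sort (s0F f) i.rev) := rfl

lemma muF_anti (f : α → ℕ) : Antitone (muF f) := by
  intro i j hij
  by_cases hj : j < nhF f
  · have hi : i < nhF f := lt_of_le_of_lt hij hj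
    rw [show j = ((⟨j, hj⟩ : Fin (nhF f)) : ℕ) from rfl, muF_fin,
      show i = ((⟨i, hi⟩ : Fin (nhF f)) : ℕ) from rfl, muF_fin, card_fib_EF, card_fib_EF]
    exact Tuple.monotone_sort (s0F f) (Fin.rev_le_rev.mpr hij)
  · simp [muF, hj]

lemma fibF_disj (f : α → ℕ) {v w : ℕ} (h : v ≠ w) : Disjoint (fibF f v) (fibF f w) := by
  simp only [Finset.disjoint_left, fibF, mem_filter]
  rintro a ⟨-, h1⟩ ⟨-, h2⟩
  exact h (h1 ▸ h2)

lemma valsF_eq_image (f : α → ℕ) : valsF f = Finset.image (EF f) Finset.univ := by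
  refine (Finset.eq_of_subset_of_card_le ?_ ?_).symm
  · intro v hv
    obtain ⟨i, -, rfl⟩ := Finset.mem_image.mp hv
    exact EF_mem f i
  · rw [Finset.card_image_of_injective _ (EF_inj f), Finset.card_univ, Fintype.card_fin]
    rfl

lemma fibF_nonempty (f : α → ℕ) {v : ℕ} (hv : v ∈ valsF f) : (fibF f v).Nonempty := by
  obtain ⟨a, -, rfl⟩ := Finset.mem_image.mp hv
  exact ⟨a, by simp [fibF]⟩

variable {f : α → ℕ} (hf : ∀ a b : α, a < b ↔ f a < f b)

include hf

lemma comparable_of_ne (a b : α) (h : f a ≠ f b) : a ≤ b ∨ b ≤ a := by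
  rcases lt_or_gt_of_ne h with h' | h'
  · exact Or.inl ((hf a b).mpr h').le
  · exact Or.inr ((hf b a).mpr h').le

lemma fibF_antichain (v : ℕ) : IsAntichain (· ≤ ·) (↑(fibF f v) : Set α) := by
  intro a ha b hb hne hle
  simp only [Finset.coe_filter, fibF, Set.mem_setOf_eq, Finset.mem_coe, mem_filter] at ha hb
  exact absurd ((hf a b).mp (lt_of_le_of_ne hle hne)) (by omega)

lemma antichain_const_f {A : Set α} (hA : IsAntichain (· ≤ ·) A) :
    ∀ a ∈ A, ∀ b ∈ A, f a = f b := by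
  intro a ha b hb
  by_cases hab : a = b
  · rw [hab]
  · have h1 := hA ha hb hab
    have h2 := hA hb ha (Ne.symm hab)
    have n1 : ¬ f a < f b := fun h => h1 ((hf a b).mpr h).le
    have n2 : ¬ f b < f a := fun h => h2 ((hf b a).mpr h).le
    omega

end Aux

/-- sum of an antitone function over a finset of naturals is at most the sum over an initial
segment of the same size -/
lemma antitone_sum_le (g : ℕ → ℕ) (hg : Antitone g) :
    ∀ (n : ℕ) (J : Finset ℕ), J.card = n → ∑ j ∈ J, g j ≤ ∑ j ∈ Finset.range n, g j := by
  intro n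
  induction n with
  | zero => intro J hJ; simp [Finset.card_eq_zero.mp hJ]
  | succ n ih =>
    intro J hJ
    have hne : J.Nonempty := Finset.card_pos.mp (by omega)
    set x := J.max' hne with hx
    have hxmem : x ∈ J := J.max'_mem hne
    have hsub : J ⊆ Finset.range (x + 1) := by
      intro y hy
      exact Finset.mem_range.mpr (Nat.lt_succ_of_le (J.le_max' y hy))
    have hcard : n + 1 ≤ x + 1 := by
      calc n + 1 = J.card := hJ.symm
      _ ≤ (Finset.range (x+1)).card := Finset.card_le_card hsub
      _ = x + 1 := Finset.card_range _
    have h1 : ∑ j ∈ J.erase x, g j ≤ ∑ j ∈ Finset.range n, g j := by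
      apply ih
      rw [Finset.card_erase_of_mem hxmem, hJ]; omega
    calc ∑ j ∈ J, g j = g x + ∑ j ∈ J.erase x, g j := (Finset.add_sum_erase J g hxmem).symm
    _ ≤ g n + ∑ j ∈ Finset.range n, g j := by
        exact Nat.add_le_add (hg (by omega)) h1
    _ = ∑ j ∈ Finset.range (n+1), g j := by rw [Finset.sum_range_succ]; ring

-- dk formula
section DK
variable {α : Type} [Fintype α] [PartialOrder α] {f : α → ℕ}
  (hf : ∀ a b : α, a < b ↔ f a < f b)

include hf

lemma dk_eq (k : ℕ) : dk α k = ∑ i ∈ Finset.range k, muF f i := by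
  classical
  apply le_antisymm
  · -- upper bound
    apply csSup_le
    · exact ⟨0, fun _ => ∅, fun i => Set.Subsingleton.isAntichain (by simp) _, by simp⟩
    · rintro n ⟨A, hA, rfl⟩
      -- choose a common fiber value for each antichain
      have hv : ∀ i : Fin k, ∃ v : ℕ, ∀ a ∈ A i, f a = v := by
        intro i
        rcases Set.eq_empty_or_nonempty (A i) with h | ⟨a0, ha0⟩
        · exact ⟨0, by simp [h]⟩
        · exact ⟨f a0, fun a ha => antichain_const_f hf (hA i) a ha a0 ha0⟩
      choose v hvv using hv
      set T : Finset ℕ := (Finset.image v Finset.univ) ∩ valsF f with hT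
      have hsub : (⋃ i, A i) ⊆ ↑(T.biUnion (fibF f)) := by
        rintro a ha
        obtain ⟨i, hai⟩ := Set.mem_iUnion.mp ha
        have h1 : f a = v i := hvv i a hai
        have h2 : v i ∈ T := by
          refine Finset.mem_inter.mpr ⟨Finset.mem_image.mpr ⟨i, Finset.mem_univ _, rfl⟩, ?_⟩
          rw [← h1]; exact Finset.mem_image.mpr ⟨a, Finset.mem_univ _, rfl⟩
        simp only [Finset.coe_biUnion, Set.mem_iUnion, Finset.mem_coe]
        exact ⟨v i, h2, by simp [fibF, h1]⟩
      have h3 : (⋃ i, A i).ncard ≤ (T.biUnion (fibF f)).card := by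
        rw [← Set.ncard_coe_finset]
        exact Set.ncard_le_ncard hsub (Set.toFinite _)
      have h4 : (T.biUnion (fibF f)).card = ∑ u ∈ T, (fibF f u).card :=
        Finset.card_biUnion (fun x _ y _ hxy => fibF_disj f hxy)
      -- rewrite T as image of EF over an index set
      set IT : Finset (Fin (nhF f)) := Finset.univ.filter (fun i => EF f i ∈ T) with hIT
      have hTeq : T = IT.image (EF f) := by
        apply Finset.Subset.antisymm
        · intro u hu
          have hu2 : u ∈ valsF f := (Finset.mem_inter.mp hu).2
          rw [valsF_eq_image] at hu2
          obtain ⟨i, -, rfl⟩ := Finset.mem_image.mp hu2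
          exact Finset.mem_image.mpr ⟨i, Finset.mem_filter.mpr ⟨Finset.mem_univ _, hu⟩, rfl⟩
        · intro u hu
          obtain ⟨i, hi, rfl⟩ := Finset.mem_image.mp hu
          exact (Finset.mem_filter.mp hi).2
      have h5 : ∑ u ∈ T, (fibF f u).card = ∑ i ∈ IT, muF f (i : ℕ) := by
        rw [hTeq, Finset.sum_image (fun x _ y _ h => EF_inj f h)]
        exact Finset.sum_congr rfl (fun i _ => (muF_fin f i).symm)
      set J : Finset ℕ := IT.image (fun i : Fin (nhF f) => (i : ℕ)) with hJ
      have h6 : ∑ i ∈ IT, muF f (i : ℕ) = ∑ j ∈ J, muF f j := by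
        rw [hJ, Finset.sum_image (fun x _ y _ h => Fin.val_injective h)]
      have hJcard : J.card ≤ k := by
        have e1 : J.card = IT.card :=
          Finset.card_image_of_injective _ Fin.val_injective
        have e2 : IT.card = T.card := by
          rw [hTeq, Finset.card_image_of_injective _ (EF_inj f)]
        have e3 : T.card ≤ (Finset.image v Finset.univ).card :=
          Finset.card_le_card Finset.inter_subset_left
        have e4 : (Finset.image v Finset.univ).card ≤ k := by
          calc (Finset.image v Finset.univ).card ≤ (Finset.univ : Finset (Fin k)).card :=
            Finset.card_image_le
          _ = k := by simp
        omega
      have h7 : ∑ j ∈ J, muF f j ≤ ∑ j ∈ Finset.range J.card, muF f j :=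
        antitone_sum_le _ (muF_anti f) _ J rfl
      have h8 : ∑ j ∈ Finset.range J.card, muF f j ≤ ∑ j ∈ Finset.range k, muF f j :=
        Finset.sum_le_sum_of_subset (Finset.range_subset_range.mpr hJcard)
      omega
  · -- lower bound: the k largest fibers
    have hbdd : BddAbove {n | ∃ A : Fin k → Set α,
        (∀ i, IsAntichain (· ≤ ·) (A i)) ∧ (⋃ i, A i).ncard = n} := by
      refine ⟨Fintype.card α, ?_⟩
      rintro n ⟨A, hA, hn⟩
      rw [← hn]
      calc (⋃ i, A i).ncard ≤ (Set.univ : Set α).ncard :=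
        Set.ncard_le_ncard (Set.subset_univ _) Set.finite_univ
      _ = Fintype.card α := by rw [Set.ncard_univ, Nat.card_eq_fintype_card]
    apply le_csSup hbdd
    simp only [Set.mem_setOf_eq]
    refine ⟨fun i : Fin k => ((if h' : (i : ℕ) < nhF f then fibF f (EF f ⟨i, h'⟩) else ∅ : Finset α) : Set α), ?_, ?_⟩
    · intro i
      by_cases h' : (i : ℕ) < nhF f
      · simpa [h'] using fibF_antichain hf (EF f ⟨i, h'⟩)
      · simp only [h', dif_neg, not_false_iff, Finset.coe_empty]
        exact Set.Subsingleton.isAntichain (by simp) _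
    · show (⋃ i : Fin k, ((if h' : (i : ℕ) < nhF f then fibF f (EF f ⟨i, h'⟩) else ∅ : Finset α) : Set α)).ncard = ∑ i ∈ Finset.range k, muF f i
      set F : Fin k → Finset α := fun i =>
        if h' : (i : ℕ) < nhF f then fibF f (EF f ⟨i, h'⟩) else ∅ with hF
      have hcoe2 : (⋃ i, (↑(F i) : Set α)) = ↑(Finset.univ.biUnion F) := by
        rw [Finset.coe_biUnion]
        simp
      rw [hcoe2, Set.ncard_coe_finset]
      have hdisj : ∀ x ∈ (Finset.univ : Finset (Fin k)), ∀ y ∈ Finset.univ, x ≠ y →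
          Disjoint (F x) (F y) := by
        rintro x - y - hxy
        by_cases hx : (x : ℕ) < nhF f
        · by_cases hy : (y : ℕ) < nhF f
          · simp only [hF, dif_pos hx, dif_pos hy]
            apply fibF_disj
            intro hEE
            have h2 : (x : ℕ) = (y : ℕ) := congrArg (Fin.val : Fin (nhF f) → ℕ) (EF_inj f hEE)
            exact hxy (Fin.val_injective h2)
          · simp [hF, dif_neg hy]
        · simp [hF, dif_neg hx]
      rw [Finset.card_biUnion hdisj]
      rw [← Fin.sum_univ_eq_sum_range (fun j => muF f j) k]
      apply Finset.sum_congr rfl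
      rintro i -
      by_cases h' : (i : ℕ) < nhF f <;> simp [hF, h', muF]
end DK


/-- If `P` is a finite weak order and `Q` an arbitrary finite poset, then the
maximum size of a semiantichain in `P × Q` equals
`∑_{i=1}^k μ_i^P ⬝ |B_i|` for some family `B_1, …, B_k` of pairwise disjoint
antichains of `Q`, where `μ_i = d_i(P) - d_{i-1}(P)`. -/
theorem maxSemiantichain_weak_order_decomposable
    (α β : Type) [Fintype α] [PartialOrder α] [Fintype β] [PartialOrder β]
    (hw : IsWeakOrder α) :
    ∃ (k : ℕ) (B : Fin k → Set β),
      (∀ i, IsAntichain (· ≤ ·) (B i)) ∧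
      (∀ i j, i ≠ j → Disjoint (B i) (B j)) ∧
      maxSemiantichain α β =
        ∑ i : Fin k, (dk α ((i : ℕ) + 1) - dk α (i : ℕ)) * (B i).ncard := by
  classical
  obtain ⟨f, hf⟩ := hw
  have hdk : ∀ k, dk α k = ∑ i ∈ Finset.range k, muF f i := dk_eq hf
  -- the set of achievable weighted sums
  set T : Set ℕ := {n | ∃ B : Fin (nhF f) → Finset β,
      (∀ i, IsAntichain (· ≤ ·) ((B i : Set β))) ∧
      (∀ i j, i ≠ j → Disjoint (B i) (B j)) ∧
      n = ∑ i : Fin (nhF f), muF f (i : ℕ) * (B i).card} with hT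
  have hempty : IsAntichain ((· ≤ ·) : β → β → Prop) (∅ : Set β) := Set.pairwise_empty _
  have hT0 : (0 : ℕ) ∈ T := by
    refine ⟨fun _ => ∅, fun i => by simpa using hempty, fun i j _ => by simp, by simp⟩
  have hTbdd : BddAbove T := by
    refine ⟨∑ i : Fin (nhF f), muF f (i : ℕ) * Fintype.card β, ?_⟩
    rintro n ⟨B, -, -, rfl⟩
    exact Finset.sum_le_sum fun i _ => Nat.mul_le_mul_left _ (Finset.card_le_univ _)
  obtain ⟨Bst, hBanti, hBdisj, hN⟩ := Nat.sSup_mem ⟨0, hT0⟩ hTbdd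
  -- the semiantichain size set
  have hMS0 : (0 : ℕ) ∈ {n | ∃ S : Set (α × β), IsSemiantichain S ∧ S.ncard = n} :=
    ⟨∅, fun x hx => absurd hx (Set.notMem_empty x), by simp⟩
  have hMSbdd : BddAbove {n | ∃ S : Set (α × β), IsSemiantichain S ∧ S.ncard = n} := by
    refine ⟨Fintype.card (α × β), ?_⟩
    rintro n ⟨S, -, rfl⟩
    calc S.ncard ≤ (Set.univ : Set (α × β)).ncard :=
      Set.ncard_le_ncard (Set.subset_univ _) Set.finite_univ
    _ = Fintype.card (α × β) := by rw [Set.ncard_univ, Nat.card_eq_fintype_card]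
  -- direction 1 : max semiantichain ≤ sSup T
  have hle1 : maxSemiantichain α β ≤ sSup T := by
    apply csSup_le ⟨0, hMS0⟩
    rintro n ⟨S, hS, rfl⟩
    set Sa : α → Set β := fun a => {x | (a, x) ∈ S} with hSa
    have hSa_anti : ∀ a, IsAntichain (· ≤ ·) (Sa a) := by
      intro a x hx y hy hxy hle
      exact hS (a, x) hx (a, y) hy (by simp [Prod.ext_iff, hxy])
        (({a} : Set α) ×ˢ ({x, y} : Set β))
        (Or.inl ⟨a, {x, y}, IsChain.pair hle, rfl⟩)
        ⟨⟨rfl, by simp⟩, ⟨rfl, by simp⟩⟩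
    have hSa_disj : ∀ a b, f a ≠ f b → Disjoint (Sa a) (Sa b) := by
      intro a b hab
      rw [Set.disjoint_left]
      intro x hxa hxb
      have hne : a ≠ b := fun h => hab (by rw [h])
      have hchain : IsChain (· ≤ ·) ({a, b} : Set α) := by
        rcases comparable_of_ne hf a b hab with h | h
        · exact IsChain.pair h
        · exact Set.pair_comm b a ▸ IsChain.pair h
      exact hS (a, x) hxa (b, x) hxb (by simp [Prod.ext_iff, hne])
        (({a, b} : Set α) ×ˢ ({x} : Set β))
        (Or.inr ⟨x, {a, b}, hchain, rfl⟩)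
        ⟨⟨by simp, rfl⟩, ⟨by simp, rfl⟩⟩
    -- sum decomposition
    have hcard1 : S.ncard = ∑ a : α, (Sa a).ncard := by
      rw [Set.ncard_eq_toFinset_card']
      rw [Finset.card_eq_sum_card_fiberwise
        (f := fun z : α × β => z.1) (t := Finset.univ) (fun x _ => Finset.mem_univ x.1)]
      apply Finset.sum_congr rfl
      rintro a -
      rw [Set.ncard_eq_toFinset_card']
      refine Finset.card_bij' (fun z _ => z.2) (fun x _ => (a, x)) ?_ ?_ ?_ ?_
      case _ =>
        intro z hz
        rw [Finset.mem_filter] at hz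
        rw [Set.mem_toFinset]
        show (a, z.2) ∈ S
        rw [← hz.2, Prod.mk.eta]
        exact Set.mem_toFinset.mp hz.1
      case _ =>
        intro x hx
        rw [Set.mem_toFinset] at hx
        rw [Finset.mem_filter]
        exact ⟨Set.mem_toFinset.mpr hx, rfl⟩
      case _ =>
        intro z hz
        rw [Finset.mem_filter] at hz
        exact Prod.ext_iff.mpr ⟨hz.2.symm, rfl⟩
      case _ =>
        intro x hx
        rfl
    have hcard2 : ∑ a : α, (Sa a).ncard
        = ∑ i : Fin (nhF f), ∑ a ∈ fibF f (EF f i), (Sa a).ncard := by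
      rw [← Finset.sum_fiberwise_of_maps_to (t := valsF f)
        (g := f) (fun a _ => Finset.mem_image.mpr ⟨a, Finset.mem_univ a, rfl⟩)
        (fun a => (Sa a).ncard)]
      rw [valsF_eq_image f, Finset.sum_image (fun x _ y _ h => EF_inj f h)]
      rfl
    -- choose maximizers in each fiber
    have hchoice : ∀ i : Fin (nhF f), ∃ a ∈ fibF f (EF f i),
        ∀ b ∈ fibF f (EF f i), (Sa b).ncard ≤ (Sa a).ncard :=
      fun i => Finset.exists_max_image _ (fun a => (Sa a).ncard)
        (fibF_nonempty f (EF_mem f i))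
    choose aa haamem haamax using hchoice
    have hfaa : ∀ i, f (aa i) = EF f i := by
      intro i
      have := haamem i
      simp only [fibF, Finset.mem_filter] at this
      exact this.2
    set Bc : Fin (nhF f) → Finset β := fun i => (Sa (aa i)).toFinset with hBc
    have hmem : (∑ i : Fin (nhF f), muF f (i : ℕ) * (Bc i).card) ∈ T := by
      refine ⟨Bc, ?_, ?_, rfl⟩
      · intro i
        simpa [hBc, Set.coe_toFinset] using hSa_anti (aa i)
      · intro i j hij
        rw [hBc]
        rw [Set.disjoint_toFinset]
        apply hSa_disj
        rw [hfaa i, hfaa j]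
        exact fun h => hij (EF_inj f h)
    have hkey : S.ncard ≤ ∑ i : Fin (nhF f), muF f (i : ℕ) * (Bc i).card := by
      rw [hcard1, hcard2]
      apply Finset.sum_le_sum
      rintro i -
      calc ∑ a ∈ fibF f (EF f i), (Sa a).ncard
          ≤ (fibF f (EF f i)).card • (Sa (aa i)).ncard :=
            Finset.sum_le_card_nsmul _ _ _ (fun b hb => haamax i b hb)
      _ = muF f (i : ℕ) * (Bc i).card := by
          rw [smul_eq_mul, muF_fin f i, hBc]
          congr 1
          exact Set.ncard_eq_toFinset_card' _
    exact le_trans hkey (le_csSup hTbdd hmem)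
  -- direction 2 : sSup T ≤ max semiantichain
  have hle2 : sSup T ≤ maxSemiantichain α β := by
    rw [hN]
    apply le_csSup hMSbdd
    refine ⟨⋃ i : Fin (nhF f), ((fibF f (EF f i) ×ˢ Bst i : Finset (α × β)) : Set (α × β)),
      ?_, ?_⟩
    · -- semiantichain
      rintro x hx y hy hne U hU ⟨hxU, hyU⟩
      obtain ⟨i, hxi⟩ := Set.mem_iUnion.mp hx
      obtain ⟨j, hyj⟩ := Set.mem_iUnion.mp hy
      rw [Finset.mem_coe, Finset.mem_product] at hxi hyj
      have hfx : f x.1 = EF f i := by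
        have := hxi.1; simp only [fibF, Finset.mem_filter] at this; exact this.2
      have hfy : f y.1 = EF f j := by
        have := hyj.1; simp only [fibF, Finset.mem_filter] at this; exact this.2
      rcases hU with ⟨p, C, hC, rfl⟩ | ⟨q, C, hC, rfl⟩
      · -- same first coordinate
        have hx1 : x.1 = p := hxU.1
        have hy1 : y.1 = p := hyU.1
        have hij : i = j := EF_inj f (by rw [← hfx, ← hfy, hx1, hy1])
        have hne2 : x.2 ≠ y.2 := by
          intro h
          exact hne (Prod.ext (hx1.trans hy1.symm) h)
        rcases hC hxU.2 hyU.2 hne2 with h | h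
        · exact hBanti i (Finset.mem_coe.mpr hxi.2) (Finset.mem_coe.mpr (hij ▸ hyj.2)) hne2 h
        · exact hBanti i (Finset.mem_coe.mpr (hij ▸ hyj.2)) (Finset.mem_coe.mpr hxi.2)
            (Ne.symm hne2) h
      · -- same second coordinate
        have hx2 : x.2 = q := hxU.2
        have hy2 : y.2 = q := hyU.2
        have hij : i = j := by
          by_contra hij
          exact (Finset.disjoint_left.mp (hBdisj i j hij)) hxi.2 (by rw [hx2, ← hy2]; exact hyj.2)
        have hne1 : x.1 ≠ y.1 := by
          intro h
          exact hne (Prod.ext h (hx2.trans hy2.symm))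
        have hcomp := hC hxU.1 hyU.1 hne1
        have h1 : f x.1 = f y.1 := by rw [hfx, hfy, hij]
        rcases hcomp with h | h
        · exact absurd ((hf _ _).mp (lt_of_le_of_ne h hne1)) (by omega)
        · exact absurd ((hf _ _).mp (lt_of_le_of_ne h (Ne.symm hne1))) (by omega)
    · -- cardinality
      have hdisj : ∀ x ∈ (Finset.univ : Finset (Fin (nhF f))), ∀ y ∈ Finset.univ, x ≠ y →
          Disjoint (fibF f (EF f x) ×ˢ Bst x) (fibF f (EF f y) ×ˢ Bst y) := by
        rintro i - j - hij
        rw [Finset.disjoint_left]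
        rintro z hz1 hz2
        rw [Finset.mem_product] at hz1 hz2
        exact Finset.disjoint_left.mp
          (fibF_disj f (fun h => hij (EF_inj f h))) hz1.1 hz2.1
      have hcoe : (⋃ i : Fin (nhF f), ((fibF f (EF f i) ×ˢ Bst i : Finset (α × β)) : Set (α × β)))
          = ↑(Finset.univ.biUnion (fun i : Fin (nhF f) => fibF f (EF f i) ×ˢ Bst i)) := by
        rw [Finset.coe_biUnion]
        simp
      rw [hcoe, Set.ncard_coe_finset, Finset.card_biUnion hdisj]
      apply Finset.sum_congr rfl
      rintro i -
      rw [Finset.card_product, muF_fin f i]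
  -- assemble
  refine ⟨nhF f, fun i => ((Bst i : Finset β) : Set β), hBanti,
    fun i j hij => Finset.disjoint_coe.mpr (hBdisj i j hij), ?_⟩
  rw [le_antisymm hle1 hle2, hN]
  apply Finset.sum_congr rfl
  rintro i -
  rw [Set.ncard_coe_finset]
  congr 1
  rw [hdk, hdk, Finset.sum_range_succ]
  omega
end
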